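/- arXiv:1501.02978 — 2 statements merged into one kernel-verified Lean document; each statement's English description precedes it below -/
import Mathlib

section
/- Let A be a finite-dimensional algebra and M an indecomposable non-projective Gorenstein-projective A-module. Then the syzygy Ω(M) is also an indecomposable non-projective Gorenstein-projective A-module. -/
universe u v w

/-- A witness that `M` is Gorenstein-projective: a totally acyclic complex of
finite-dimensional projective `A`-modules having `M` as a cocycle. -/
structure GPWitness (k : Type u) (A : Type v) (M : Type w) [Field k] [Ring A] [Algebra k A]
    [AddCommGroup M] [Module A M] : Type (max v (w + 1)) where
  P : ℤ → Type w
  [acg : ∀ n, AddCommGroup (P n)]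
  [mod : ∀ n, Module A (P n)]
  proj : ∀ n, Module.Projective A (P n)
  fin : ∀ n, Module.Finite A (P n)
  d : ∀ n, P n →ₗ[A] P (n + 1)
  ex : ∀ n, Function.Exact (d n) (d (n + 1))
  dualEx : ∀ n, Function.Exact
    (fun f : P (n + 1 + 1) →ₗ[A] A => (f.comp (d (n + 1)) : P (n + 1) →ₗ[A] A))
    (fun f : P (n + 1) →ₗ[A] A => (f.comp (d n) : P n →ₗ[A] A))
  cocycle : Nonempty (M ≃ₗ[A] LinearMap.ker (d 0))

/-- `M` is a Gorenstein-projective `A`-module. -/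
def IsGorensteinProjective (k : Type u) (A : Type v) (M : Type w) [Field k] [Ring A]
    [Algebra k A] [AddCommGroup M] [Module A M] : Prop :=
  Nonempty (GPWitness k A M)

/-- `π : P → M` is a projective cover: `P` is projective, `π` is surjective and
its kernel is superfluous in `P`. -/
def IsProjectiveCover (A : Type v) [Ring A] {P M : Type w} [AddCommGroup P] [Module A P]
    [AddCommGroup M] [Module A M] (π : P →ₗ[A] M) : Prop :=
  Module.Projective A P ∧ Function.Surjective π ∧
    ∀ N : Submodule A P, N ⊔ LinearMap.ker π = ⊤ → N = ⊤

/-- `M` is an indecomposable module: nonzero, and any direct sum decomposition is trivial. -/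
def IsIndecomposable (A : Type v) (M : Type w) [Ring A] [AddCommGroup M] [Module A M] : Prop :=
  (∃ x : M, x ≠ 0) ∧ ∀ N N' : Submodule A M, IsCompl N N' → N = ⊥ ∨ N' = ⊥

/-- A witness that `X` is a (first) syzygy of `Y`. -/
structure SyzygyWitness (A : Type v) (X Y : Type w) [Ring A] [AddCommGroup X] [Module A X]
    [AddCommGroup Y] [Module A Y] : Type (max v (w + 1)) where
  P : Type w
  [acg : AddCommGroup P]
  [mod : Module A P]
  π : P →ₗ[A] Y
  cover : IsProjectiveCover A π
  iso : Nonempty (X ≃ₗ[A] LinearMap.ker π)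

/-- `X` is a syzygy `Ω(Y)` of `Y`. -/
def IsSyzygyOf (A : Type v) (X Y : Type w) [Ring A] [AddCommGroup X] [Module A X]
    [AddCommGroup Y] [Module A Y] : Prop :=
  Nonempty (SyzygyWitness A X Y)

/-- A factorization of `f` through a projective module. -/
structure ProjFactorization (A : Type v) {X Y : Type w} [Ring A] [AddCommGroup X] [Module A X]
    [AddCommGroup Y] [Module A Y] (f : X →ₗ[A] Y) : Type (max v (w + 1)) where
  Q : Type w
  [acg : AddCommGroup Q]
  [mod : Module A Q]
  proj : Module.Projective A Q
  g : X →ₗ[A] Q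
  h : Q →ₗ[A] Y
  fac : f = h.comp g

/-- `f` factors through a projective module. -/
def FactorsThroughProjective (A : Type v) {X Y : Type w} [Ring A] [AddCommGroup X] [Module A X]
    [AddCommGroup Y] [Module A Y] (f : X →ₗ[A] Y) : Prop :=
  Nonempty (ProjFactorization A f)

/-- An injective coresolution of `M` of length at most `n`. -/
structure InjCoresWitness (R : Type v) (M : Type w) [Ring R] [AddCommGroup M] [Module R M]
    (n : ℕ) : Type (max v (w + 1)) where
  C : ℕ → Type w
  [acg : ∀ i, AddCommGroup (C i)]
  [mod : ∀ i, Module R (C i)]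
  inj : ∀ i, Module.Injective R (C i)
  ε : M →ₗ[R] C 0
  d : ∀ i, C i →ₗ[R] C (i + 1)
  mono : Function.Injective ε
  ex0 : Function.Exact ε (d 0)
  ex : ∀ i, Function.Exact (d i) (d (i + 1))
  bounded : ∀ i, n < i → Subsingleton (C i)

/-- The injective dimension of `M` is at most `n`. -/
def InjDimLE (R : Type v) (M : Type w) [Ring R] [AddCommGroup M] [Module R M] (n : ℕ) : Prop :=
  Nonempty (InjCoresWitness R M n)

/-- `A` is an `m`-Gorenstein algebra: the regular module has injective dimension at
most `m` on both sides. -/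
def IsGorensteinAlg (A : Type v) [Ring A] (m : ℕ) : Prop :=
  InjDimLE A A m ∧ InjDimLE Aᵐᵒᵖ Aᵐᵒᵖ m

namespace GPAux

section QDef

variable {A : Type v} [Ring A] (PP : ℤ → Type w) [∀ n, AddCommGroup (PP n)]
  [∀ n, Module A (PP n)] (P KQ : Type w) [AddCommGroup P] [Module A P]
  [AddCommGroup KQ] [Module A KQ]

/-- The underlying family of the modified totally acyclic complex. -/
def QMod : ℤ → Type w
  | .ofNat 0 => P
  | .ofNat (m + 1) => PP (.ofNat m)
  | .negSucc 0 => KQ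
  | .negSucc (m + 1) => PP (.negSucc (m + 2))

instance QAcg : ∀ n, AddCommGroup (QMod PP P KQ n)
  | .ofNat 0 => inferInstanceAs (AddCommGroup P)
  | .ofNat (m + 1) => inferInstanceAs (AddCommGroup (PP (.ofNat m)))
  | .negSucc 0 => inferInstanceAs (AddCommGroup KQ)
  | .negSucc (m + 1) => inferInstanceAs (AddCommGroup (PP (.negSucc (m + 2))))

instance QModule : ∀ n, Module A (QMod PP P KQ n)
  | .ofNat 0 => inferInstanceAs (Module A P)
  | .ofNat (m + 1) => inferInstanceAs (Module A (PP (.ofNat m)))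
  | .negSucc 0 => inferInstanceAs (Module A KQ)
  | .negSucc (m + 1) => inferInstanceAs (Module A (PP (.negSucc (m + 2))))

variable (e0 : P →ₗ[A] PP (.ofNat 0)) (em1 : KQ →ₗ[A] P)
  (em2 : PP (.negSucc 2) →ₗ[A] KQ) (dd : ∀ n, PP n →ₗ[A] PP (n + 1))

/-- The differentials of the modified totally acyclic complex. -/
def QD : ∀ n : ℤ, QMod PP P KQ n →ₗ[A] QMod PP P KQ (n + 1)
  | .ofNat 0 => e0
  | .ofNat (m + 1) => dd (.ofNat m)
  | .negSucc 0 => em1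
  | .negSucc 1 => em2
  | .negSucc (m + 2) => dd (.negSucc (m + 3))

end QDef

section Helpers

variable {A : Type v} [Ring A]

/-- Dual exactness from exactness plus a lifting property for functionals. -/
theorem exact_of_sections {α β γ : Type w} [AddCommGroup α] [Module A α]
    [AddCommGroup β] [Module A β] [AddCommGroup γ] [Module A γ]
    (F : α →ₗ[A] β) (G : β →ₗ[A] γ) (hFG : Function.Exact F G)
    (hlift : ∀ g : β →ₗ[A] A, g ∘ₗ F = 0 → ∃ h : γ →ₗ[A] A, h ∘ₗ G = g) :
    Function.Exact (fun f : γ →ₗ[A] A => f ∘ₗ G) (fun f : β →ₗ[A] A => f ∘ₗ F) := by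
  intro g
  constructor
  · intro hg
    obtain ⟨h, hh⟩ := hlift g hg
    exact ⟨h, hh⟩
  · rintro ⟨h, rfl⟩
    ext x
    simp [LinearMap.comp_apply, hFG.apply_apply_eq_zero x]

/-- Factoring a map that kills the kernel of a surjection through the surjection. -/
theorem factor_through {P M V : Type w} [AddCommGroup P] [Module A P]
    [AddCommGroup M] [Module A M] [AddCommGroup V] [Module A V]
    (π : P →ₗ[A] M) (hsurj : Function.Surjective π) (D : P →ₗ[A] V)
    (hker : LinearMap.ker π ≤ LinearMap.ker D) : ∃ σ : M →ₗ[A] V, σ ∘ₗ π = D := by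
  refine ⟨(Submodule.liftQ (LinearMap.ker π) D hker) ∘ₗ
    (π.quotKerEquivOfSurjective hsurj).symm.toLinearMap, ?_⟩
  ext x
  have h1 : (π.quotKerEquivOfSurjective hsurj).symm (π x) =
      Submodule.Quotient.mk x := by
    apply (π.quotKerEquivOfSurjective hsurj).injective
    simp only [LinearEquiv.apply_symm_apply]
    rfl
  simp only [LinearMap.comp_apply, LinearEquiv.coe_coe, h1, Submodule.liftQ_apply]

end Helpers

section Main

variable {k : Type u} {A : Type v} [Field k] [Ring A] [Algebra k A]
variable {M : Type w} [AddCommGroup M] [Module A M]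
variable (PP : ℤ → Type w) [∀ n, AddCommGroup (PP n)] [∀ n, Module A (PP n)]
variable (dd : ∀ n : ℤ, PP n →ₗ[A] PP (n + 1))

/-- From a projective cover, produce a map `s` from the term of the witness
complex in degree `-1` onto the cover, together with a section `t`. -/
theorem cover_setup {R : Type v} [Ring R] {PP : ℤ → Type w} [∀ n, AddCommGroup (PP n)]
    [∀ n, Module R (PP n)] (dd : ∀ n : ℤ, PP n →ₗ[R] PP (n + 1))
    {M : Type w} [AddCommGroup M] [Module R M]
    (hprojP : ∀ n, Module.Projective R (PP n))
    (hex : ∀ n, Function.Exact (dd n) (dd (n + 1)))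
    (iso : M ≃ₗ[R] LinearMap.ker (dd 0))
    {P : Type w} [AddCommGroup P] [Module R P] (π : P →ₗ[R] M)
    (hproj : Module.Projective R P) (hsurj : Function.Surjective π)
    (hsmall : ∀ N : Submodule R P, N ⊔ LinearMap.ker π = ⊤ → N = ⊤) :
    ∃ (s : PP (-1) →ₗ[R] P) (t : P →ₗ[R] PP (-1)),
      (∀ x : P, s (t x) = x) ∧
      (∀ z : PP (-1),
        (LinearMap.ker (dd 0)).subtype (iso (π (s z))) = dd (-1) z) := by
  haveI : ∀ n, Module.Projective R (PP n) := hprojP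
  haveI := hproj
  have hmem : ∀ z : PP (-1), dd (-1) z ∈ LinearMap.ker (dd 0) := fun z =>
    LinearMap.mem_ker.mpr ((hex (-1)).apply_apply_eq_zero z)
  set E : PP (-1) →ₗ[R] ↥(LinearMap.ker (dd 0)) :=
    LinearMap.codRestrict _ (dd (-1)) hmem with hE
  set π₂ : P →ₗ[R] ↥(LinearMap.ker (dd 0)) := iso.toLinearMap ∘ₗ π with hπ₂
  have hπ₂surj : Function.Surjective π₂ := by
    intro y
    obtain ⟨x, hx⟩ := hsurj (iso.symm y)
    exact ⟨x, by simp [hπ₂, hx]⟩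
  obtain ⟨s, hs⟩ := Module.projective_lifting_property π₂ E hπ₂surj
  have hssurj : Function.Surjective s := by
    have h1 : LinearMap.range s ⊔ LinearMap.ker π = ⊤ := by
      rw [eq_top_iff]
      rintro x -
      obtain ⟨z, hz⟩ : ∃ z, E z = π₂ x := by
        obtain ⟨z0, hz0⟩ := (hex (-1) ((π₂ x : ↥(LinearMap.ker (dd 0))) : PP 0)).mp
          (LinearMap.mem_ker.mp (π₂ x).2)
        exact ⟨z0, Subtype.ext hz0⟩
      refine Submodule.mem_sup.mpr ⟨s z, LinearMap.mem_range_self s z, x - s z, ?_, by abel⟩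
      have h2 : π₂ (x - s z) = 0 := by
        rw [map_sub, ← LinearMap.comp_apply π₂ s z, hs, hz, sub_self]
      rw [hπ₂] at h2
      simp only [LinearMap.comp_apply, LinearEquiv.coe_coe] at h2
      exact LinearMap.mem_ker.mpr (iso.map_eq_zero_iff.mp h2)
    exact LinearMap.range_eq_top.mp (hsmall _ h1)
  obtain ⟨t, ht⟩ := Module.projective_lifting_property s LinearMap.id hssurj
  refine ⟨s, t, fun x => LinearMap.congr_fun ht x, fun z => ?_⟩
  have h1 : π₂ (s z) = E z := LinearMap.congr_fun hs z
  calc (LinearMap.ker (dd 0)).subtype (iso (π (s z)))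
      = (LinearMap.ker (dd 0)).subtype (π₂ (s z)) := rfl
    _ = (LinearMap.ker (dd 0)).subtype (E z) := by rw [h1]
    _ = dd (-1) z := rfl


/-- Extension of scalar-valued maps on the `-1`-cycles of a totally acyclic complex. -/
theorem ext_scalar (hex : ∀ n, Function.Exact (dd n) (dd (n + 1)))
    (hdual : ∀ n, Function.Exact
      (fun f : PP (n + 1 + 1) →ₗ[A] A => (f.comp (dd (n + 1)) : PP (n + 1) →ₗ[A] A))
      (fun f : PP (n + 1) →ₗ[A] A => (f.comp (dd n) : PP n →ₗ[A] A)))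
    (g : ↥(LinearMap.ker (dd (-1))) →ₗ[A] A) :
    ∃ G : PP (-1) →ₗ[A] A, ∀ y : LinearMap.ker (dd (-1)), G y = g y := by
  have hz32 : ∀ x : PP (-3), dd (-2) (dd (-3) x) = 0 := fun x =>
    (hex (-3)).apply_apply_eq_zero x
  have hz21 : ∀ x : PP (-2), dd (-1) (dd (-2) x) = 0 := fun x =>
    (hex (-2)).apply_apply_eq_zero x
  have hmem : ∀ x : PP (-2), dd (-2) x ∈ LinearMap.ker (dd (-1)) := fun x =>
    LinearMap.mem_ker.mpr (hz21 x)
  set c : PP (-2) →ₗ[A] ↥(LinearMap.ker (dd (-1))) :=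
    LinearMap.codRestrict _ (dd (-2)) hmem with hc
  have h0 : (g ∘ₗ c) ∘ₗ dd (-3) = 0 := by
    ext z
    show g (c (dd (-3) z)) = 0
    have hcz : c (dd (-3) z) = 0 := Subtype.ext (hz32 z)
    rw [hcz, map_zero]
  obtain ⟨h₀, hh₀⟩ : ∃ h : PP (-1) →ₗ[A] A, h ∘ₗ dd (-2) = g ∘ₗ c :=
    (hdual (-3) _).mp h0
  refine ⟨h₀, fun y => ?_⟩
  obtain ⟨x, hx⟩ : ∃ x, dd (-2) x = (y : PP (-1)) :=
    (hex (-2) _).mp (LinearMap.mem_ker.mp y.2)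
  have h2 : h₀ (dd (-2) x) = g (c x) := LinearMap.congr_fun hh₀ x
  have h3 : c x = y := Subtype.ext hx
  show h₀ ↑y = g y
  rw [← hx, h2, h3]

/-- Extension of maps into finitely generated projectives on the `-1`-cycles. -/
theorem ext_proj (hex : ∀ n, Function.Exact (dd n) (dd (n + 1)))
    (hdual : ∀ n, Function.Exact
      (fun f : PP (n + 1 + 1) →ₗ[A] A => (f.comp (dd (n + 1)) : PP (n + 1) →ₗ[A] A))
      (fun f : PP (n + 1) →ₗ[A] A => (f.comp (dd n) : PP n →ₗ[A] A)))
    (V : Type w) [AddCommGroup V] [Module A V]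
    (hVp : Module.Projective A V) (hVf : Module.Finite A V)
    (g : ↥(LinearMap.ker (dd (-1))) →ₗ[A] V) :
    ∃ G : PP (-1) →ₗ[A] V, ∀ y : LinearMap.ker (dd (-1)), G y = g y := by
  haveI := hVp
  haveI := hVf
  obtain ⟨n, φ, hφ⟩ := Module.Finite.exists_fin' A V
  obtain ⟨ι, hι⟩ := Module.projective_lifting_property φ LinearMap.id hφ
  choose H hH using fun j : Fin n =>
    ext_scalar PP dd hex hdual ((LinearMap.proj j : (Fin n → A) →ₗ[A] A) ∘ₗ ι ∘ₗ g)
  refine ⟨φ ∘ₗ LinearMap.pi H, fun y => ?_⟩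
  have h1 : (LinearMap.pi H) (y : PP (-1)) = ι (g y) := by
    funext j
    have h2 : H j ↑y = ((LinearMap.proj j : (Fin n → A) →ₗ[A] A) ∘ₗ ι ∘ₗ g) y := hH j y
    simpa [LinearMap.pi_apply] using h2
  show φ ((LinearMap.pi H) ↑y) = g y
  rw [h1]
  exact LinearMap.congr_fun hι (g y)

/-- Extension of maps into finitely generated projectives defined on the kernel of a
projective cover of a Gorenstein projective module. -/
theorem ext_cover (hprojP : ∀ n, Module.Projective A (PP n))
    (hex : ∀ n, Function.Exact (dd n) (dd (n + 1)))
    (hdual : ∀ n, Function.Exact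
      (fun f : PP (n + 1 + 1) →ₗ[A] A => (f.comp (dd (n + 1)) : PP (n + 1) →ₗ[A] A))
      (fun f : PP (n + 1) →ₗ[A] A => (f.comp (dd n) : PP n →ₗ[A] A)))
    (iso : M ≃ₗ[A] LinearMap.ker (dd 0))
    {P : Type w} [AddCommGroup P] [Module A P] (π : P →ₗ[A] M)
    (hproj : Module.Projective A P) (hsurj : Function.Surjective π)
    (hsmall : ∀ N : Submodule A P, N ⊔ LinearMap.ker π = ⊤ → N = ⊤)
    (V : Type w) [AddCommGroup V] [Module A V]
    (hVp : Module.Projective A V) (hVf : Module.Finite A V)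
    (g : ↥(LinearMap.ker π) →ₗ[A] V) :
    ∃ G : P →ₗ[A] V, ∀ y : LinearMap.ker π, G y = g y := by
  obtain ⟨s, t, hst, hsE⟩ := cover_setup dd hprojP hex iso π hproj hsurj hsmall
  have hsker : ∀ z : PP (-1), dd (-1) z = 0 → π (s z) = 0 := by
    intro z hz
    have h1 := hsE z
    rw [hz] at h1
    exact iso.map_eq_zero_iff.mp (Subtype.ext h1)
  set c : ↥(LinearMap.ker (dd (-1))) →ₗ[A] ↥(LinearMap.ker π) :=
    LinearMap.codRestrict _ (s ∘ₗ (LinearMap.ker (dd (-1))).subtype)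
      (fun z => LinearMap.mem_ker.mpr (hsker ↑z (LinearMap.mem_ker.mp z.2))) with hc
  obtain ⟨G0, hG0⟩ := ext_proj PP dd hex hdual V hVp hVf (g ∘ₗ c)
  refine ⟨G0 ∘ₗ t, fun y => ?_⟩
  have hty : dd (-1) (t ↑y) = 0 := by
    have h1 := hsE (t ↑y)
    rw [hst ↑y] at h1
    rw [← h1]
    have h2 : π (↑y : P) = 0 := LinearMap.mem_ker.mp y.2
    rw [h2, map_zero, map_zero]
  have h2 : G0 (t ↑y) = g (c ⟨t ↑y, LinearMap.mem_ker.mpr hty⟩) :=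
    hG0 ⟨t ↑y, LinearMap.mem_ker.mpr hty⟩
  show G0 (t ↑y) = g y
  rw [h2]
  congr 1
  apply Subtype.ext
  show s (t ↑y) = ↑y
  exact hst ↑y

/-- The kernel of a projective cover of a Gorenstein-projective module is
Gorenstein-projective. -/
theorem gp_of_cover [IsNoetherianRing A]
    (hprojP : ∀ n, Module.Projective A (PP n)) (hfinP : ∀ n, Module.Finite A (PP n))
    (hex : ∀ n, Function.Exact (dd n) (dd (n + 1)))
    (hdual : ∀ n, Function.Exact
      (fun f : PP (n + 1 + 1) →ₗ[A] A => (f.comp (dd (n + 1)) : PP (n + 1) →ₗ[A] A))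
      (fun f : PP (n + 1) →ₗ[A] A => (f.comp (dd n) : PP n →ₗ[A] A)))
    (iso : M ≃ₗ[A] LinearMap.ker (dd 0))
    {P : Type w} [AddCommGroup P] [Module A P] (π : P →ₗ[A] M)
    (hproj : Module.Projective A P) (hfin : Module.Finite A P)
    (hsurj : Function.Surjective π)
    (hsmall : ∀ N : Submodule A P, N ⊔ LinearMap.ker π = ⊤ → N = ⊤) :
    IsGorensteinProjective k A (LinearMap.ker π) := by
  classical
  haveI := hproj
  haveI := hfin
  haveI : ∀ n, Module.Projective A (PP n) := hprojP
  haveI : ∀ n, Module.Finite A (PP n) := hfinP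
  obtain ⟨s, t, hst, hsE0⟩ := cover_setup dd hprojP hex iso π hproj hsurj hsmall
  let dm4 : PP (-4) →ₗ[A] PP (-3) := dd (-4)
  let dm3 : PP (-3) →ₗ[A] PP (-2) := dd (-3)
  let dm2 : PP (-2) →ₗ[A] PP (-1) := dd (-2)
  let dm1 : PP (-1) →ₗ[A] PP 0 := dd (-1)
  let d0 : PP 0 →ₗ[A] PP 1 := dd 0
  have hsE : ∀ z : PP (-1), (LinearMap.ker (dd 0)).subtype (iso (π (s z))) = dm1 z :=
    fun z => hsE0 z
  have hz21 : ∀ x : PP (-2), dm1 (dm2 x) = 0 := fun x =>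
    (hex (-2)).apply_apply_eq_zero x
  have hz32 : ∀ x : PP (-3), dm2 (dm3 x) = 0 := fun x =>
    (hex (-3)).apply_apply_eq_zero x
  have hz43 : ∀ x : PP (-4), dm3 (dm4 x) = 0 := fun x =>
    (hex (-4)).apply_apply_eq_zero x
  have hz10 : ∀ x : PP (-1), d0 (dm1 x) = 0 := fun x =>
    (hex (-1)).apply_apply_eq_zero x
  have hπ0 : ∀ y : P, (LinearMap.ker (dd 0)).subtype (iso (π y)) = 0 → π y = 0 := fun y h =>
    iso.map_eq_zero_iff.mp (Subtype.ext h)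
  have hπ0' : ∀ y : P, π y = 0 → (LinearMap.ker (dd 0)).subtype (iso (π y)) = 0 := fun y h => by
    rw [h, map_zero, map_zero]
  have hπs0 : ∀ z : PP (-1), dm1 z = 0 → π (s z) = 0 := fun z h =>
    hπ0 _ (by rw [hsE z, h])
  have hπs0' : ∀ z : PP (-1), π (s z) = 0 → dm1 z = 0 := fun z h => by
    rw [← hsE z]; exact hπ0' _ h
  -- the projection onto `ker s`
  have hqmem : ∀ x : PP (-2), (dm2 - t ∘ₗ (s ∘ₗ dm2)) x ∈ LinearMap.ker s := by
    intro x
    rw [LinearMap.mem_ker, LinearMap.sub_apply, LinearMap.comp_apply, LinearMap.comp_apply,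
      map_sub, hst, sub_self]
  let qb : PP (-2) →ₗ[A] ↥(LinearMap.ker s) :=
    LinearMap.codRestrict _ (dm2 - t ∘ₗ (s ∘ₗ dm2)) hqmem
  have hqbval : ∀ x : PP (-2), (qb x : PP (-1)) = dm2 x - t (s (dm2 x)) := fun x => rfl
  have hqbsurj : Function.Surjective qb := by
    rintro ⟨c, hc⟩
    have hc0 : s c = 0 := LinearMap.mem_ker.mp hc
    have hd1c : dm1 c = 0 := hπs0' c (by rw [hc0, map_zero])
    obtain ⟨x, hx⟩ : c ∈ Set.range dm2 := (hex (-2) _).mp hd1c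
    refine ⟨x, Subtype.ext ?_⟩
    show (qb x : PP (-1)) = c
    rw [hqbval x, hx, hc0, map_zero, sub_zero]
  let pS : PP (-1) →ₗ[A] PP (-1) := LinearMap.id - t ∘ₗ s
  have hpSmem : ∀ x : PP (-1), pS x ∈ LinearMap.ker s := by
    intro x
    rw [LinearMap.mem_ker]
    show s (x - t (s x)) = 0
    rw [map_sub, hst, sub_self]
  have hkSproj : Module.Projective A ↥(LinearMap.ker s) := by
    apply Module.Projective.of_split (LinearMap.ker s).subtype
      (LinearMap.codRestrict _ pS hpSmem)
    ext y
    have h1 : s (↑y : PP (-1)) = 0 := LinearMap.mem_ker.mp y.2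
    show (↑y : PP (-1)) - t (s ↑y) = ↑y
    rw [h1, map_zero, sub_zero]
  haveI := hkSproj
  obtain ⟨σ, hσ⟩ := Module.projective_lifting_property qb LinearMap.id hqbsurj
  have hσap : ∀ z : ↥(LinearMap.ker s), qb (σ z) = z := fun z => LinearMap.congr_fun hσ z
  let KQ : Submodule A (PP (-2)) := LinearMap.ker qb
  have hKQmem : ∀ x : PP (-2), x ∈ KQ ↔ qb x = 0 := fun x => LinearMap.mem_ker
  let pK : PP (-2) →ₗ[A] PP (-2) := LinearMap.id - σ ∘ₗ qb
  have hrmem : ∀ x : PP (-2), pK x ∈ KQ := by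
    intro x
    refine (hKQmem _).mpr ?_
    show qb (x - σ (qb x)) = 0
    rw [map_sub, hσap, sub_self]
  let rK : PP (-2) →ₗ[A] ↥KQ := LinearMap.codRestrict _ pK hrmem
  have hrKval : ∀ x : PP (-2), (rK x : PP (-2)) = x - σ (qb x) := fun x => rfl
  have hrKid : ∀ y : ↥KQ, rK ↑y = y := by
    intro y
    apply Subtype.ext
    rw [hrKval, (hKQmem _).mp y.2, map_zero, sub_zero]
  have hKQproj : Module.Projective A ↥KQ := by
    apply Module.Projective.of_split KQ.subtype rK
    ext y
    show (↑y : PP (-2)) - σ (qb ↑y) = ↑y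
    rw [(hKQmem _).mp y.2, map_zero, sub_zero]
  have hKQfin : Module.Finite A ↥KQ := Module.Finite.iff_fg.mpr (IsNoetherian.noetherian KQ)
  -- the three new maps
  let e0 : P →ₗ[A] PP 0 := (LinearMap.ker (dd 0)).subtype ∘ₗ (iso.toLinearMap ∘ₗ π)
  have he0 : ∀ x : P, e0 x = (LinearMap.ker (dd 0)).subtype (iso (π x)) := fun x => rfl
  let em1 : ↥KQ →ₗ[A] P := s ∘ₗ (dm2 ∘ₗ KQ.subtype)
  have hem1 : ∀ x : ↥KQ, em1 x = s (dm2 ↑x) := fun x => rfl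
  have hm2mem : ∀ z : PP (-3), dm3 z ∈ KQ := by
    intro z
    refine (hKQmem _).mpr ?_
    apply Subtype.ext
    simp [hqbval, hz32 z]
  let em2 : PP (-3) →ₗ[A] ↥KQ := LinearMap.codRestrict _ dm3 hm2mem
  have hem2 : ∀ z : PP (-3), (em2 z : PP (-2)) = dm3 z := fun z => rfl
  -- forward exactness at the modified spots
  have hE0d0 : Function.Exact e0 d0 := by
    intro y
    constructor
    · intro hy
      have hy' : dd 0 y = 0 := hy
      obtain ⟨x, hx⟩ := hsurj (iso.symm ⟨y, LinearMap.mem_ker.mpr hy'⟩)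
      refine ⟨x, ?_⟩
      rw [he0 x, hx, LinearEquiv.apply_symm_apply]
      rfl
    · rintro ⟨x, rfl⟩
      rw [he0 x]
      exact LinearMap.mem_ker.mp (iso (π x)).2
  have hEm1e0 : Function.Exact em1 e0 := by
    intro y
    constructor
    · intro hy
      have hπy : π y = 0 := hπ0 y (by rw [← he0 y]; exact hy)
      have hty : dm1 (t y) = 0 := hπs0' (t y) (by rw [hst, hπy])
      obtain ⟨x, hx⟩ : t y ∈ Set.range dm2 := (hex (-2) _).mp hty
      have hxKQ : x ∈ KQ := by
        refine (hKQmem _).mpr ?_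
        apply Subtype.ext
        simp [hqbval, hx, hst]
      refine ⟨⟨x, hxKQ⟩, ?_⟩
      have h2 : em1 ⟨x, hxKQ⟩ = s (dm2 x) := hem1 ⟨x, hxKQ⟩
      rw [h2, hx, hst]
    · rintro ⟨x, rfl⟩
      rw [he0 (em1 x), hem1 x, hsE (dm2 ↑x), hz21 ↑x]
  have hEm2em1 : Function.Exact em2 em1 := by
    intro y
    constructor
    · intro hy
      have hy' : s (dm2 ↑y) = 0 := by rw [← hem1 y]; exact hy
      have h1 : dm2 (↑y : PP (-2)) = 0 := by
        have h2 : (qb (↑y : PP (-2)) : PP (-1)) = dm2 ↑y - t (s (dm2 ↑y)) := hqbval ↑y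
        rw [(hKQmem _).mp y.2, hy', map_zero, sub_zero] at h2
        rw [← h2]
        simp
      obtain ⟨z, hz⟩ : (↑y : PP (-2)) ∈ Set.range dm3 := (hex (-3) _).mp h1
      refine ⟨z, Subtype.ext ?_⟩
      rw [hem2 z]
      exact hz
    · rintro ⟨z, rfl⟩
      have h2 : em1 (em2 z) = s (dm2 ↑(em2 z)) := hem1 _
      rw [h2, hem2 z, hz32 z, map_zero]
  have hEm3em2 : Function.Exact dm4 em2 := by
    intro y
    constructor
    · intro hy
      have h1 : dm3 y = 0 := by
        rw [← hem2 y, hy]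
        simp
      exact (hex (-4) _).mp h1
    · rintro ⟨z, rfl⟩
      apply Subtype.ext
      rw [hem2, hz43 z]
      simp
  -- dual lifting properties at the modified spots
  have hD0 : ∀ g : PP 0 →ₗ[A] A, g ∘ₗ e0 = 0 → ∃ h : PP 1 →ₗ[A] A, h ∘ₗ d0 = g := by
    intro g hg
    have hg0 : ∀ u : ↥(LinearMap.ker (dd 0)), g ((LinearMap.ker (dd 0)).subtype u) = 0 := by
      intro u
      obtain ⟨x, hx⟩ := hsurj (iso.symm u)
      have h1 : e0 x = (LinearMap.ker (dd 0)).subtype u := by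
        rw [he0 x, hx, LinearEquiv.apply_symm_apply]
      rw [← h1]
      exact LinearMap.congr_fun hg x
    have h2 : g ∘ₗ dm1 = 0 := by
      ext z
      show g (dm1 z) = 0
      have h3 : dm1 z ∈ LinearMap.ker (dd 0) := LinearMap.mem_ker.mpr (hz10 z)
      have h4 : g (dm1 z) = g ((LinearMap.ker (dd 0)).subtype ⟨dm1 z, h3⟩) := rfl
      rw [h4]
      exact hg0 _
    exact (hdual (-1) _).mp h2
  have hDm1 : ∀ g : P →ₗ[A] A, g ∘ₗ em1 = 0 → ∃ h : PP 0 →ₗ[A] A, h ∘ₗ e0 = g := by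
    intro g hg
    have hgker : ∀ y : P, π y = 0 → g y = 0 := by
      intro y hy
      have h1 : e0 y = 0 := by rw [he0 y]; exact hπ0' y hy
      obtain ⟨x, hx⟩ := (hEm1e0 y).mp h1
      rw [← hx]
      exact LinearMap.congr_fun hg x
    have h1 : (g ∘ₗ s) ∘ₗ dm2 = 0 := by
      ext x
      show g (s (dm2 x)) = 0
      exact hgker _ (hπs0 _ (hz21 x))
    obtain ⟨h, hh⟩ : ∃ h : PP 0 →ₗ[A] A, h ∘ₗ dm1 = g ∘ₗ s := (hdual (-2) _).mp h1
    refine ⟨h, ?_⟩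
    ext y
    show h (e0 y) = g y
    have h2 : e0 y = dm1 (t y) := by
      rw [he0 y, ← hsE (t y), hst]
    rw [h2]
    have h3 : h (dm1 (t y)) = g (s (t y)) := LinearMap.congr_fun hh (t y)
    rw [h3, hst]
  have hDm2 : ∀ g : ↥KQ →ₗ[A] A, g ∘ₗ em2 = 0 → ∃ h : P →ₗ[A] A, h ∘ₗ em1 = g := by
    intro g hg
    have h1 : (g ∘ₗ rK) ∘ₗ dm3 = 0 := by
      ext z
      show g (rK (dm3 z)) = 0
      have h2 : rK (dm3 z) = em2 z := by
        apply Subtype.ext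
        have h3 : qb (dm3 z) = 0 := (hKQmem _).mp (hm2mem z)
        rw [hrKval, hem2 z, h3, map_zero, sub_zero]
      rw [h2]
      exact LinearMap.congr_fun hg z
    obtain ⟨h₀, hh₀⟩ : ∃ h : PP (-1) →ₗ[A] A, h ∘ₗ dm2 = g ∘ₗ rK := (hdual (-3) _).mp h1
    refine ⟨h₀ ∘ₗ t, ?_⟩
    ext x
    show h₀ (t (em1 x)) = g x
    have h3 : t (s (dm2 (↑x : PP (-2)))) = dm2 ↑x := by
      have h4 : (qb (↑x : PP (-2)) : PP (-1)) = dm2 ↑x - t (s (dm2 ↑x)) := hqbval ↑x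
      rw [(hKQmem _).mp x.2] at h4
      have h5 : (0 : PP (-1)) = dm2 ↑x - t (s (dm2 ↑x)) := by
        rw [← h4]
        simp
      exact (sub_eq_zero.mp h5.symm).symm
    rw [hem1 x, h3]
    have h7 : h₀ (dm2 (↑x : PP (-2))) = g (rK ↑x) := LinearMap.congr_fun hh₀ ↑x
    rw [h7, hrKid x]
  have hDm3 : ∀ g : PP (-3) →ₗ[A] A, g ∘ₗ dm4 = 0 → ∃ h : ↥KQ →ₗ[A] A, h ∘ₗ em2 = g := by
    intro g hg
    obtain ⟨h₀, hh₀⟩ : ∃ h : PP (-2) →ₗ[A] A, h ∘ₗ dm3 = g := (hdual (-4) _).mp hg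
    refine ⟨h₀ ∘ₗ KQ.subtype, ?_⟩
    ext z
    show h₀ ((em2 z : PP (-2))) = g z
    rw [hem2 z]
    exact LinearMap.congr_fun hh₀ z
  -- assemble the witness
  let DQ : ∀ n : ℤ, QMod PP P ↥KQ n →ₗ[A] QMod PP P ↥KQ (n + 1) :=
    QD PP P ↥KQ (show P →ₗ[A] PP (Int.ofNat 0) from e0) em1
      (show PP (Int.negSucc 2) →ₗ[A] ↥KQ from em2) dd
  have hker2 : (LinearMap.ker (DQ 0) : Submodule A P) = LinearMap.ker π := by
    ext x
    show DQ 0 x = 0 ↔ π x = 0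
    constructor
    · intro h
      refine hπ0 x ?_
      rw [← he0 x]
      exact h
    · intro h
      show e0 x = 0
      rw [he0 x]
      exact hπ0' x h
  refine ⟨⟨QMod PP P ↥KQ, ?_, ?_, DQ, ?_, ?_, ?_⟩⟩
  · intro n
    rcases n with (_ | m) | (_ | m)
    · exact hproj
    · exact hprojP _
    · exact hKQproj
    · exact hprojP _
  · intro n
    rcases n with (_ | m) | (_ | m)
    · exact hfin
    · exact hfinP _
    · exact hKQfin
    · exact hfinP _
  · intro n
    rcases n with (_ | m) | (_ | _ | _ | m)
    · exact hE0d0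
    · exact hex (Int.ofNat m)
    · exact hEm1e0
    · exact hEm2em1
    · exact hEm3em2
    · exact hex (Int.negSucc (m + 4))
  · intro n
    rcases n with (_ | m) | (_ | _ | _ | m)
    · exact exact_of_sections e0 d0 hE0d0 hD0
    · exact hdual (Int.ofNat m)
    · exact exact_of_sections em1 e0 hEm1e0 hDm1
    · exact exact_of_sections em2 em1 hEm2em1 hDm2
    · exact exact_of_sections dm4 em2 hEm3em2 hDm3
    · exact hdual (Int.negSucc (m + 4))
  · exact ⟨LinearEquiv.ofEq _ _ hker2.symm⟩

end Main

end GPAux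

/-- Lemma 2.1(1): the syzygy of an indecomposable non-projective Gorenstein-projective
module is again indecomposable, non-projective and Gorenstein-projective. -/
theorem syzygy_of_indecomposable_gorenstein_projective (k : Type u) (A : Type v) [Field k]
    [Ring A] [Algebra k A] [FiniteDimensional k A]
    (M : Type w) [AddCommGroup M] [Module A M] [Module.Finite A M]
    (hMgp : IsGorensteinProjective k A M) (hMind : IsIndecomposable A M)
    (hMnp : ¬ Module.Projective A M)
    (P : Type w) [AddCommGroup P] [Module A P] (π : P →ₗ[A] M)
    (hπ : IsProjectiveCover A π) :
    IsGorensteinProjective k A (LinearMap.ker π) ∧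
      IsIndecomposable A (LinearMap.ker π) ∧
      ¬ Module.Projective A (LinearMap.ker π) := by
  classical
  obtain ⟨hproj, hsurj, hsmall⟩ := hπ
  haveI : IsNoetherianRing A :=
    isNoetherian_of_tower k (IsNoetherian.iff_fg.mpr ‹FiniteDimensional k A›)
  haveI : IsArtinianRing A := isArtinian_of_tower k inferInstance
  haveI := hproj
  obtain ⟨w⟩ := hMgp
  letI := w.acg
  letI := w.mod
  obtain ⟨iso⟩ := w.cocycle
  -- `P` is a finitely generated module
  have hPfin : Module.Finite A P := by
    obtain ⟨S, hS⟩ := Module.finite_def.mp ‹Module.Finite A M›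
    choose pre hpre using hsurj
    have hsup : Submodule.span A (pre '' ↑S) ⊔ LinearMap.ker π = ⊤ := by
      rw [eq_top_iff]
      rintro x -
      have hx : π x ∈ Submodule.span A (↑S : Set M) := by rw [hS]; trivial
      have himg : Submodule.map π (Submodule.span A (pre '' ↑S)) =
          Submodule.span A (↑S : Set M) := by
        rw [Submodule.map_span, Set.image_image]
        simp only [hpre, Set.image_id']
      rw [← himg] at hx
      obtain ⟨y, hy, hyx⟩ := hx
      refine Submodule.mem_sup.mpr ⟨y, hy, x - y, ?_, by abel⟩
      rw [LinearMap.mem_ker, map_sub, hyx, sub_self]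
    have h2 := hsmall _ hsup
    refine Module.finite_def.mpr ⟨S.image pre, ?_⟩
    rw [Finset.coe_image]
    exact h2
  haveI := hPfin
  have hKfg : Module.Finite A ↥(LinearMap.ker π) :=
    Module.Finite.iff_fg.mpr (IsNoetherian.noetherian _)
  -- part 3 : the syzygy is not projective
  have hnp : ¬ Module.Projective A ↥(LinearMap.ker π) := by
    intro hKp
    apply hMnp
    obtain ⟨G, hG⟩ := GPAux.ext_cover w.P w.d w.proj w.ex w.dualEx iso π hproj hsurj hsmall
      ↥(LinearMap.ker π) hKp hKfg LinearMap.id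
    set D : P →ₗ[A] P := LinearMap.id - (LinearMap.ker π).subtype ∘ₗ G with hD
    have hDker : LinearMap.ker π ≤ LinearMap.ker D := by
      intro y hy
      rw [LinearMap.mem_ker, hD]
      show y - (LinearMap.ker π).subtype (G y) = 0
      have h1 : G y = ⟨y, hy⟩ := hG ⟨y, hy⟩
      rw [h1]
      exact sub_self y
    obtain ⟨σ, hσ⟩ := GPAux.factor_through π hsurj D hDker
    have hπσ : π ∘ₗ σ = LinearMap.id := by
      apply LinearMap.ext
      intro z
      obtain ⟨x, rfl⟩ := hsurj z
      show π (σ (π x)) = π x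
      have h1 : σ (π x) = D x := LinearMap.congr_fun hσ x
      rw [h1, hD]
      show π (x - (LinearMap.ker π).subtype (G x)) = π x
      have h2 : π ((LinearMap.ker π).subtype (G x)) = 0 := (G x).2
      rw [map_sub, h2, sub_zero]
    exact Module.Projective.of_split σ π hπσ
  refine ⟨?_, ⟨?_, ?_⟩, hnp⟩
  · exact GPAux.gp_of_cover w.P w.d w.proj w.fin w.ex w.dualEx iso π hproj hPfin hsurj hsmall
  · -- the syzygy is nonzero
    have hkerne : LinearMap.ker π ≠ ⊥ := by
      intro hbot
      apply hMnp
      exact Module.Projective.of_equiv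
        (LinearEquiv.ofBijective π ⟨LinearMap.ker_eq_bot.mp hbot, hsurj⟩)
    obtain ⟨x, hx, hx0⟩ := (Submodule.ne_bot_iff _).mp hkerne
    exact ⟨⟨x, hx⟩, fun h => hx0 (congrArg Subtype.val h)⟩
  · -- the syzygy is indecomposable
    intro N N' hc
    set f : ↥(LinearMap.ker π) →ₗ[A] ↥(LinearMap.ker π) :=
      N.subtype ∘ₗ Submodule.projectionOnto N N' hc with hfdef
    have hfN : ∀ a : ↥(LinearMap.ker π), a ∈ N → f a = a := by
      intro a ha
      rw [hfdef]
      show N.subtype (Submodule.projectionOnto N N' hc a) = a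
      have h1 := Submodule.projectionOnto_apply_left hc ⟨a, ha⟩
      rw [show ((⟨a, ha⟩ : N) : ↥(LinearMap.ker π)) = a from rfl] at h1
      rw [h1]
      rfl
    have hfN' : ∀ a, a ∈ N' → f a = 0 := by
      intro a ha
      rw [hfdef]
      show N.subtype (Submodule.projectionOnto N N' hc a) = 0
      rw [Submodule.projectionOnto_apply_of_mem_right hc ha, map_zero]
    have hfmem : ∀ a, f a ∈ N := by
      intro a
      rw [hfdef]
      exact (Submodule.projectionOnto N N' hc a).2
    have hff : ∀ a, f (f a) = f a := fun a => hfN (f a) (hfmem a)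
    obtain ⟨g, hg⟩ := GPAux.ext_cover w.P w.d w.proj w.ex w.dualEx iso π hproj hsurj hsmall
      P hproj hPfin ((LinearMap.ker π).subtype ∘ₗ f)
    have hgf : ∀ y : ↥(LinearMap.ker π), g ↑y = ↑(f y) := fun y => hg y
    obtain ⟨h, hh⟩ := GPAux.factor_through π hsurj (π ∘ₗ g) (by
      intro y hy
      rw [LinearMap.mem_ker]
      show π (g y) = 0
      rw [show y = ((⟨y, hy⟩ : ↥(LinearMap.ker π)) : P) from rfl, hgf ⟨y, hy⟩]
      exact (f ⟨y, hy⟩).2)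
    have hhπ : ∀ x : P, h (π x) = π (g x) := fun x => LinearMap.congr_fun hh x
    obtain ⟨n, hn⟩ := Filter.eventually_atTop.mp h.eventually_isCompl_ker_pow_range_pow
    set m := max n 1 with hm
    have hm1 : m ≠ 0 := Nat.one_le_iff_ne_zero.mp (le_max_right n 1)
    have hcompl := hn m (le_max_left n 1)
    have hcomm : ∀ (j : ℕ) (x : P), (h ^ j) (π x) = π ((g ^ j) x) := by
      intro j
      induction j with
      | zero => intro x; simp
      | succ j ih =>
        intro x
        rw [pow_succ, pow_succ, Module.End.mul_apply, Module.End.mul_apply, hhπ x, ih (g x)]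
    have hgff : ∀ (j : ℕ) (y : ↥(LinearMap.ker π)), (g ^ j) ↑y = ↑((f ^ j) y) := by
      intro j
      induction j with
      | zero => intro y; simp
      | succ j ih =>
        intro y
        rw [pow_succ, pow_succ, Module.End.mul_apply, Module.End.mul_apply, hgf y, ih (f y)]
    have hfpow : ∀ j : ℕ, j ≠ 0 → ∀ y, (f ^ j) y = f y := by
      intro j
      induction j with
      | zero => intro h0; exact absurd rfl h0
      | succ j ih =>
        intro _ y
        rcases Nat.eq_zero_or_pos j with hj | hj
        · subst hj; rw [pow_one]
        · rw [pow_succ, Module.End.mul_apply, ih (Nat.pos_iff_ne_zero.mp hj) (f y), hff y]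
    rcases hMind.2 _ _ hcompl with hker0 | hrng0
    · -- `h ^ m` is injective, hence `f` is injective and `N' = ⊥`
      right
      have hhinj : Function.Injective (h ^ m) := LinearMap.ker_eq_bot.mp hker0
      have hhsurj : Function.Surjective (h ^ m) :=
        IsArtinian.surjective_of_injective_endomorphism _ hhinj
      have hsup : LinearMap.range (g ^ m) ⊔ LinearMap.ker π = ⊤ := by
        rw [eq_top_iff]
        rintro x -
        obtain ⟨m0, hm0⟩ := hhsurj (π x)
        obtain ⟨y, rfl⟩ := hsurj m0
        have h1 : π ((g ^ m) y) = π x := by rw [← hcomm m y, hm0]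
        refine Submodule.mem_sup.mpr
          ⟨(g ^ m) y, LinearMap.mem_range_self _ y, x - (g ^ m) y, ?_, by abel⟩
        rw [LinearMap.mem_ker, map_sub, h1, sub_self]
      have hgmsurj : Function.Surjective (g ^ m) :=
        LinearMap.range_eq_top.mp (hsmall _ hsup)
      have hgsurj : Function.Surjective g :=
        Module.End.surjective_of_iterate_surjective hm1 hgmsurj
      have hginj : Function.Injective g :=
        IsNoetherian.injective_of_surjective_endomorphism g hgsurj
      rw [Submodule.eq_bot_iff]
      intro a ha
      have h1 : f a = 0 := hfN' a ha
      have h2 : g ↑a = 0 := by rw [hgf a, h1, ZeroMemClass.coe_zero]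
      have h3 : (a : P) = 0 := hginj (by rw [h2, map_zero])
      exact Subtype.ext h3
    · -- `h ^ m = 0`, hence `N` is a projective direct summand inside a small
      -- submodule, so `N = ⊥`
      left
      have hrng : ∀ x : P, π ((g ^ m) x) = 0 := by
        intro x
        have h1 : (h ^ m) (π x) ∈ LinearMap.range (h ^ m) := LinearMap.mem_range_self _ _
        rw [hrng0] at h1
        have h2 : (h ^ m) (π x) = 0 := h1
        rw [← hcomm m x]
        exact h2
      let β : P →ₗ[A] ↥(LinearMap.ker π) :=
        LinearMap.codRestrict (LinearMap.ker π) (g ^ m)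
          (fun x => LinearMap.mem_ker.mpr (hrng x))
      have hβval : ∀ x : P, (β x : P) = (g ^ m) x := fun x => rfl
      have hβy : ∀ y : ↥(LinearMap.ker π), β ↑y = f y := by
        intro y
        apply Subtype.ext
        rw [hβval, hgff m y, hfpow m hm1 y]
      let u : P →ₗ[A] P := (LinearMap.ker π).subtype ∘ₗ (f ∘ₗ β)
      have huval : ∀ x : P, u x = ↑(f (β x)) := fun x => rfl
      have hukerπ : ∀ x, π (u x) = 0 := fun x => (f (β x)).2
      have huu : ∀ x, u (u x) = u x := by
        intro x
        have e1 : β (u x) = f (f (β x)) := by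
          rw [show u x = ↑(f (β x)) from rfl]
          exact hβy (f (β x))
        rw [huval (u x), e1, hff (β x), hff (β x)]
        exact (huval x).symm
      have hsup : LinearMap.ker u ⊔ LinearMap.ker π = ⊤ := by
        rw [eq_top_iff]
        rintro x -
        refine Submodule.mem_sup.mpr
          ⟨x - u x, ?_, u x, LinearMap.mem_ker.mpr (hukerπ x), by abel⟩
        rw [LinearMap.mem_ker, map_sub, huu, sub_self]
      have hkeru : LinearMap.ker u = ⊤ := hsmall _ hsup
      have hu0 : ∀ x, u x = 0 := by
        intro x
        have h1 : x ∈ LinearMap.ker u := by rw [hkeru]; trivial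
        exact LinearMap.mem_ker.mp h1
      rw [Submodule.eq_bot_iff]
      intro a ha
      have h3 : u ↑a = ↑a := by
        rw [huval, hβy a, hff a, hfN a ha]
      have h4 := hu0 ↑a
      rw [h3] at h4
      exact Subtype.ext h4
end

section
/- Let A = kQ/I be a monomial algebra and p a perfect path. Then the left A-module Ap is Gorenstein-projective and non-projective. -/
universe u v w

/-- A presentation of the `k`-algebra `A` as a monomial algebra `kQ/I` on the quiver
with vertex type `V`: `ι` sends each path of `Q` to its canonical image in `A`
(with `ι (p.comp q) = ι q * ι p`, so that the paper's concatenation `pq`, defined when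
`s(p) = t(q)`, corresponds to the product `ι p * ι q`), and `Z p` means `p ∈ I`. -/
structure MonomialPresentation (k : Type u) (A : Type v) (V : Type w)
    [Field k] [Ring A] [Algebra k A] [Quiver.{w} V] [Fintype V] : Type (max u v w) where
  ι : ∀ {i j : V}, Quiver.Path i j → A
  Z : ∀ {i j : V}, Quiver.Path i j → Prop
  zero_iff : ∀ {i j : V} (p : Quiver.Path i j), ι p = 0 ↔ Z p
  mul_comp : ∀ {i j l : V} (p : Quiver.Path i j) (q : Quiver.Path j l),
    ι (p.comp q) = ι q * ι p
  orth : ∀ i j : V, i ≠ j →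
    ι (Quiver.Path.nil : Quiver.Path i i) * ι (Quiver.Path.nil : Quiver.Path j j) = 0
  sum_one : (∑ i : V, ι (Quiver.Path.nil : Quiver.Path i i)) = 1
  len_two : ∀ {i j : V} (p : Quiver.Path i j), Z p → 2 ≤ p.length
  admissible : ∃ d : ℕ, ∀ {i j : V} (p : Quiver.Path i j), d ≤ p.length → Z p
  z_mul : ∀ {i j l : V} (p : Quiver.Path i j) (q : Quiver.Path j l),
    Z p ∨ Z q → Z (p.comp q)
  indep : LinearIndependent k
    (fun x : {y : Σ i j : V, Quiver.Path i j // ¬ Z y.2.2} => ι x.1.2.2)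
  span_top : Submodule.span k
    (Set.range (fun x : Σ i j : V, Quiver.Path i j => ι x.2.2)) = ⊤

/-- The type of paths of a quiver, bundled with their endpoints. -/
abbrev PathIn (V : Type w) [Quiver.{w} V] : Type w := Σ i j : V, Quiver.Path i j

/-- The type of arrows of a quiver, bundled with their endpoints. -/
abbrev ArrowIn (V : Type w) [Quiver.{w} V] : Type w := Σ i j : V, (i ⟶ j)

/-- `x` is a sub-path of `y`. -/
def IsSubpathIn {V : Type w} [Quiver.{w} V] (x y : PathIn V) : Prop :=
  ∃ (r : Quiver.Path y.1 x.1) (s : Quiver.Path x.2.1 y.2.1),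
    y.2.2 = (r.comp x.2.2).comp s

namespace MonomialPresentation

variable {k : Type u} {A : Type v} {V : Type w}
  [Field k] [Ring A] [Algebra k A] [Quiver.{w} V] [Fintype V]
  (P : MonomialPresentation k A V)

/-- `L(p)`: the right-minimal paths `q` among the nonzero paths with
`s(q) = t(p)` and `qp = 0` in `A`. -/
def LSet {i j : V} (p : Quiver.Path i j) : Set (PathIn V) :=
  {q | ¬ P.Z q.2.2 ∧ q.1 = j ∧ P.ι q.2.2 * P.ι p = 0 ∧
    ¬ ∃ r u : PathIn V, ¬ P.Z r.2.2 ∧ r.1 = j ∧ P.ι r.2.2 * P.ι p = 0 ∧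
      1 ≤ u.2.2.length ∧ P.ι q.2.2 = P.ι u.2.2 * P.ι r.2.2}

/-- `R(p)`: the left-minimal paths `q` among the nonzero paths with
`t(q) = s(p)` and `pq = 0` in `A`. -/
def RSet {i j : V} (p : Quiver.Path i j) : Set (PathIn V) :=
  {q | ¬ P.Z q.2.2 ∧ q.2.1 = i ∧ P.ι p * P.ι q.2.2 = 0 ∧
    ¬ ∃ r u : PathIn V, ¬ P.Z r.2.2 ∧ r.2.1 = i ∧ P.ι p * P.ι r.2.2 = 0 ∧
      1 ≤ u.2.2.length ∧ P.ι q.2.2 = P.ι r.2.2 * P.ι u.2.2}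

/-- A perfect pair `(p, q)` of nonzero nontrivial paths with `s(p) = t(q)`:
`pq = 0`, `R(p) = {q}` and `L(q) = {p}`. -/
def PerfectPair {i j l : V} (p : Quiver.Path i j) (q : Quiver.Path l i) : Prop :=
  1 ≤ p.length ∧ 1 ≤ q.length ∧ ¬ P.Z p ∧ ¬ P.Z q ∧ P.Z (q.comp p) ∧
  (∀ (m : V) (q' : Quiver.Path m i), ¬ P.Z q' → P.Z (q'.comp p) →
    ∃ x : Quiver.Path m l, q' = x.comp q) ∧
  (∀ (m : V) (p' : Quiver.Path i m), ¬ P.Z p' → P.Z (q.comp p') →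
    ∃ y : Quiver.Path j m, p' = p.comp y)

/-- The perfect pair relation on bundled paths. -/
def PerfectPairS (x y : PathIn V) : Prop :=
  ∃ (i j l : V) (p : Quiver.Path i j) (q : Quiver.Path l i),
    x = ⟨i, j, p⟩ ∧ y = ⟨l, i, q⟩ ∧ P.PerfectPair p q

/-- A perfect path: a nonzero path `p` admitting a sequence
`p = p₁, p₂, …, pₙ, pₙ₊₁ = p` in which all consecutive pairs are perfect. -/
def IsPerfectPath (x : PathIn V) : Prop :=
  ∃ (n : ℕ) (c : Fin (n + 2) → PathIn V), c 0 = x ∧ c (Fin.last (n + 1)) = x ∧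
    ∀ m : Fin (n + 1), P.PerfectPairS (c m.castSucc) (c m.succ)

/-- `x ∈ F`: `x` is a minimal path contained in the ideal `I`. -/
def InF (x : PathIn V) : Prop :=
  P.Z x.2.2 ∧ ∀ y : PathIn V, IsSubpathIn y x → y ≠ x → ¬ P.Z y.2.2

/-- The algebra is quadratic monomial: all minimal relations have length two. -/
def Quadratic : Prop := ∀ x : PathIn V, P.InF x → x.2.2.length = 2

/-- The arrow relation of the relation quiver `R_A`: there is an arrow
`α → β` when `t(α) = s(β)` and `βα ∈ F`. -/
def RQ (x y : ArrowIn V) : Prop :=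
  ∃ (i j l : V) (α : i ⟶ j) (β : j ⟶ l), x = ⟨i, j, α⟩ ∧ y = ⟨j, l, β⟩ ∧
    P.InF ⟨i, l, (α.toPath).comp β.toPath⟩

/-- The two vertices of the relation quiver lie in the same connected component. -/
def Conn (x y : ArrowIn V) : Prop :=
  Relation.ReflTransGen (fun a b => P.RQ a b ∨ P.RQ b a) x y

/-- The connected component of `x` in the relation quiver is a basic cycle:
every vertex of the component has a unique successor and a unique predecessor. -/
def InPerfectComponent (x : ArrowIn V) : Prop :=
  ∀ y : ArrowIn V, P.Conn x y → (∃! z, P.RQ y z) ∧ (∃! z, P.RQ z y)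

/-- The connected component of `x` in the relation quiver contains no oriented cycle. -/
def InAcyclicComponent (x : ArrowIn V) : Prop :=
  ∀ y : ArrowIn V, P.Conn x y → ¬ Relation.TransGen P.RQ y y

end MonomialPresentation

/-- The quiver is a basic `n`-cycle. -/
def IsBasicCycleQuiver (V : Type w) [Quiver.{w} V] : Prop :=
  ∃ n : ℕ, 0 < n ∧ ∃ f : V ≃ ZMod n,
    (∀ i j : V, Nonempty (i ⟶ j) ↔ f j = f i + 1) ∧
    (∀ (i j : V) (a b : i ⟶ j), a = b)

/-- The underlying graph of the quiver is connected. -/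
def QuiverConnected (V : Type w) [Quiver.{w} V] : Prop :=
  Nonempty V ∧ ∀ i j : V,
    Relation.ReflTransGen (fun a b => Nonempty (a ⟶ b) ∨ Nonempty (b ⟶ a)) i j

/-- The quiver has no sources. -/
def NoSources (V : Type w) [Quiver.{w} V] : Prop := ∀ j : V, ∃ i : V, Nonempty (i ⟶ j)

/-- The quiver has no sinks. -/
def NoSinks (V : Type w) [Quiver.{w} V] : Prop := ∀ i : V, ∃ j : V, Nonempty (i ⟶ j)

namespace MonomialPresentation

open Quiver

set_option linter.unusedSectionVars false

variable {k : Type u} {A : Type v} {V : Type w}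
  [Field k] [Ring A] [Algebra k A] [Quiver.{w} V] [Fintype V]
  (P : MonomialPresentation k A V)

/-- The idempotent at a vertex. -/
def ee (v : V) : A := P.ι (Quiver.Path.nil : Quiver.Path v v)

lemma ee_mul_ee (v : V) : P.ee v * P.ee v = P.ee v :=
  (P.mul_comp (Quiver.Path.nil : Quiver.Path v v) Quiver.Path.nil).symm

lemma mul_ee {i j : V} (p : Quiver.Path i j) : P.ι p * P.ee i = P.ι p := by
  have h := P.mul_comp (Quiver.Path.nil : Quiver.Path i i) p
  rw [Quiver.Path.nil_comp] at h
  exact h.symm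

lemma ee_mul {i j : V} (p : Quiver.Path i j) : P.ee j * P.ι p = P.ι p :=
  (P.mul_comp p (Quiver.Path.nil : Quiver.Path j j)).symm

lemma ι_mul {i j l : V} (p : Quiver.Path i j) (q : Quiver.Path l i) :
    P.ι p * P.ι q = P.ι (q.comp p) :=
  (P.mul_comp q p).symm

lemma mul_of_ne {i j l m : V} (p : Quiver.Path i j) (q : Quiver.Path l m) (h : i ≠ m) :
    P.ι p * P.ι q = 0 := by
  conv_lhs => rw [← P.mul_ee p, ← P.ee_mul q]
  rw [mul_assoc, ← mul_assoc (P.ee i), show P.ee i * P.ee m = 0 from P.orth i m h, zero_mul,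
    mul_zero]

lemma nz_nil (v : V) : ¬ P.Z (Quiver.Path.nil : Quiver.Path v v) := by
  intro h
  have := P.len_two _ h
  simp [Quiver.Path.length] at this

lemma ee_ne (v : V) : P.ee v ≠ 0 := fun h => P.nz_nil v ((P.zero_iff _).mp h)

/-- The index type of the path basis. -/
abbrev NZ : Type w := {y : PathIn V // ¬ P.Z y.2.2}

/-- The basis of `A` given by the nonzero paths. -/
noncomputable def bas : Module.Basis P.NZ k A :=
  Module.Basis.mk P.indep (by
    rw [← P.span_top]
    refine Submodule.span_le.mpr ?_
    rintro _ ⟨y, rfl⟩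
    show P.ι y.2.2 ∈ _
    by_cases h : P.Z y.2.2
    · rw [(P.zero_iff _).mpr h]
      exact Submodule.zero_mem _
    · exact Submodule.subset_span ⟨⟨y, h⟩, rfl⟩)

lemma bas_apply (y : P.NZ) : P.bas y = P.ι y.1.2.2 := Module.Basis.mk_apply _ _ _

lemma comp_eq_iff {l i t m : V} (q : Quiver.Path l i) (r : Quiver.Path i t)
    (y₀ : Quiver.Path i m) :
    (⟨l, t, q.comp r⟩ : PathIn V) = ⟨l, m, q.comp y₀⟩ ↔ (⟨i, t, r⟩ : PathIn V) = ⟨i, m, y₀⟩ := by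
  constructor
  · intro h
    have h3 : (⟨t, q.comp r⟩ : Σ j, Quiver.Path l j) = ⟨m, q.comp y₀⟩ :=
      eq_of_heq (Sigma.mk.inj_iff.mp h).2
    obtain ⟨h4, h5⟩ := Sigma.mk.inj_iff.mp h3
    subst h4
    rw [q.comp_injective_right (eq_of_heq h5)]
  · intro h
    have h3 : (⟨t, r⟩ : Σ j, Quiver.Path i j) = ⟨m, y₀⟩ := eq_of_heq (Sigma.mk.inj_iff.mp h).2
    obtain ⟨h4, h5⟩ := Sigma.mk.inj_iff.mp h3
    subst h4
    rw [eq_of_heq h5]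

lemma comp_eq_iff' {i j t m : V} (p : Quiver.Path i j) (r : Quiver.Path t i)
    (r₀ : Quiver.Path m i) :
    (⟨t, j, r.comp p⟩ : PathIn V) = ⟨m, j, r₀.comp p⟩ ↔ (⟨t, i, r⟩ : PathIn V) = ⟨m, i, r₀⟩ := by
  constructor
  · intro h
    obtain ⟨h4, h5⟩ := Sigma.mk.inj_iff.mp h
    subst h4
    have h6 : (⟨j, r.comp p⟩ : Σ j', Quiver.Path t j') = ⟨j, r₀.comp p⟩ := eq_of_heq h5
    have h7 : r.comp p = r₀.comp p := eq_of_heq (Sigma.mk.inj_iff.mp h6).2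
    rw [Quiver.Path.comp_injective_left p h7]
  · intro h
    obtain ⟨h4, h5⟩ := Sigma.mk.inj_iff.mp h
    subst h4
    have h6 : (⟨i, r⟩ : Σ j', Quiver.Path t j') = ⟨i, r₀⟩ := eq_of_heq h5
    rw [eq_of_heq (Sigma.mk.inj_iff.mp h6).2]

end MonomialPresentation
namespace MonomialPresentation

open Quiver

set_option linter.unusedSectionVars false

variable {k : Type u} {A : Type v} {V : Type w}
  [Field k] [Ring A] [Algebra k A] [Quiver.{w} V] [Fintype V]
  (P : MonomialPresentation k A V)

theorem repr_mul_right {i l m : V} (q : Quiver.Path l i) (y₀ : Quiver.Path i m)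
    (h₀ : ¬ P.Z (q.comp y₀)) (a : A) :
    P.bas.repr (a * P.ι q) ⟨⟨l, m, q.comp y₀⟩, h₀⟩
      = P.bas.repr a ⟨⟨i, m, y₀⟩, fun h => h₀ (P.z_mul q y₀ (Or.inr h))⟩ := by
  set z₀ : P.NZ := ⟨⟨l, m, q.comp y₀⟩, h₀⟩ with hz₀
  set yy : P.NZ := ⟨⟨i, m, y₀⟩, fun h => h₀ (P.z_mul q y₀ (Or.inr h))⟩ with hyy
  let φ₁ : A →ₗ[k] k :=
    (Finsupp.lapply z₀) ∘ₗ (P.bas.repr : A →ₗ[k] (P.NZ →₀ k)) ∘ₗ (LinearMap.mulRight k (P.ι q))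
  let φ₂ : A →ₗ[k] k := (Finsupp.lapply yy) ∘ₗ (P.bas.repr : A →ₗ[k] (P.NZ →₀ k))
  suffices h : φ₁ = φ₂ by
    have h2 := DFunLike.congr_fun h a
    exact h2
  classical
  apply P.bas.ext
  rintro ⟨⟨s', t', r⟩, hr⟩
  have hb : P.bas ⟨⟨s', t', r⟩, hr⟩ = P.ι r := P.bas_apply _
  show (P.bas.repr (P.bas ⟨⟨s', t', r⟩, hr⟩ * P.ι q)) z₀
    = (P.bas.repr (P.bas ⟨⟨s', t', r⟩, hr⟩)) yy
  rw [Module.Basis.repr_self, Finsupp.single_apply, hb]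
  by_cases hs : s' = i
  · subst hs
    rw [P.ι_mul r q]
    by_cases hzc : P.Z (q.comp r)
    · rw [(P.zero_iff _).mpr hzc, map_zero, Finsupp.zero_apply, if_neg]
      intro hEq
      rw [Subtype.ext_iff] at hEq
      have h3 : (⟨s', t', r⟩ : PathIn V) = ⟨s', m, y₀⟩ := hEq
      have h5 : (⟨t', r⟩ : Σ j', Quiver.Path s' j') = ⟨m, y₀⟩ :=
        eq_of_heq (Sigma.mk.inj_iff.mp h3).2
      obtain ⟨h6, h7⟩ := Sigma.mk.inj_iff.mp h5
      subst h6
      rw [eq_of_heq h7] at hzc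
      exact h₀ hzc
    · have hb2 : P.bas ⟨⟨l, t', q.comp r⟩, hzc⟩ = P.ι (q.comp r) := P.bas_apply _
      rw [← hb2, Module.Basis.repr_self, Finsupp.single_apply]
      refine if_congr ?_ rfl rfl
      rw [Subtype.ext_iff, Subtype.ext_iff]
      exact comp_eq_iff q r y₀
  · rw [P.mul_of_ne r q hs, map_zero, Finsupp.zero_apply, if_neg]
    intro hEq
    rw [Subtype.ext_iff] at hEq
    exact hs (congrArg Sigma.fst hEq)

theorem repr_mul_ee {i : V} (a : A) (z : P.NZ) (hz : z.1.1 ≠ i) :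
    P.bas.repr (a * P.ee i) z = 0 := by
  let φ₁ : A →ₗ[k] k :=
    (Finsupp.lapply z) ∘ₗ (P.bas.repr : A →ₗ[k] (P.NZ →₀ k)) ∘ₗ (LinearMap.mulRight k (P.ee i))
  suffices h : φ₁ = 0 by
    have h2 := DFunLike.congr_fun h a
    exact h2
  classical
  apply P.bas.ext
  rintro ⟨⟨s', t', r⟩, hr⟩
  have hb : P.bas ⟨⟨s', t', r⟩, hr⟩ = P.ι r := P.bas_apply _
  show (P.bas.repr (P.bas ⟨⟨s', t', r⟩, hr⟩ * P.ee i)) z = 0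
  by_cases hs : s' = i
  · subst hs
    rw [hb, P.mul_ee r, ← hb, Module.Basis.repr_self, Finsupp.single_apply, if_neg]
    intro hEq
    rw [Subtype.ext_iff] at hEq
    exact hz (congrArg Sigma.fst hEq).symm
  · rw [hb, show P.ee i = P.ι (Quiver.Path.nil : Quiver.Path i i) from rfl,
      P.mul_of_ne r _ hs, map_zero, Finsupp.zero_apply]

theorem repr_mul_left {i j m : V} (p : Quiver.Path i j) (r₀ : Quiver.Path m i)
    (h₀ : ¬ P.Z (r₀.comp p)) (a : A) :
    P.bas.repr (P.ι p * a) ⟨⟨m, j, r₀.comp p⟩, h₀⟩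
      = P.bas.repr a ⟨⟨m, i, r₀⟩, fun h => h₀ (P.z_mul r₀ p (Or.inl h))⟩ := by
  set z₀ : P.NZ := ⟨⟨m, j, r₀.comp p⟩, h₀⟩ with hz₀
  set yy : P.NZ := ⟨⟨m, i, r₀⟩, fun h => h₀ (P.z_mul r₀ p (Or.inl h))⟩ with hyy
  let φ₁ : A →ₗ[k] k :=
    (Finsupp.lapply z₀) ∘ₗ (P.bas.repr : A →ₗ[k] (P.NZ →₀ k)) ∘ₗ (LinearMap.mulLeft k (P.ι p))
  let φ₂ : A →ₗ[k] k := (Finsupp.lapply yy) ∘ₗ (P.bas.repr : A →ₗ[k] (P.NZ →₀ k))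
  suffices h : φ₁ = φ₂ by
    have h2 := DFunLike.congr_fun h a
    exact h2
  classical
  apply P.bas.ext
  rintro ⟨⟨s', t', r⟩, hr⟩
  have hb : P.bas ⟨⟨s', t', r⟩, hr⟩ = P.ι r := P.bas_apply _
  show (P.bas.repr (P.ι p * P.bas ⟨⟨s', t', r⟩, hr⟩)) z₀
    = (P.bas.repr (P.bas ⟨⟨s', t', r⟩, hr⟩)) yy
  rw [Module.Basis.repr_self, Finsupp.single_apply, hb]
  by_cases ht : t' = i
  · subst ht
    rw [P.ι_mul p r]
    by_cases hzc : P.Z (r.comp p)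
    · rw [(P.zero_iff _).mpr hzc, map_zero, Finsupp.zero_apply, if_neg]
      intro hEq
      rw [Subtype.ext_iff] at hEq
      have h3 : (⟨s', t', r⟩ : PathIn V) = ⟨m, t', r₀⟩ := hEq
      obtain ⟨h6, h7⟩ := Sigma.mk.inj_iff.mp h3
      subst h6
      have h8 : (⟨t', r⟩ : Σ j', Quiver.Path s' j') = ⟨t', r₀⟩ := eq_of_heq h7
      rw [eq_of_heq (Sigma.mk.inj_iff.mp h8).2] at hzc
      exact h₀ hzc
    · have hb2 : P.bas ⟨⟨s', j, r.comp p⟩, hzc⟩ = P.ι (r.comp p) := P.bas_apply _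
      rw [← hb2, Module.Basis.repr_self, Finsupp.single_apply]
      refine if_congr ?_ rfl rfl
      rw [Subtype.ext_iff, Subtype.ext_iff]
      exact comp_eq_iff' p r r₀
  · rw [P.mul_of_ne p r (fun h => ht h.symm), map_zero, Finsupp.zero_apply, if_neg]
    intro hEq
    rw [Subtype.ext_iff] at hEq
    obtain ⟨h6, h7⟩ := Sigma.mk.inj_iff.mp hEq
    subst h6
    exact ht (congrArg Sigma.fst (eq_of_heq h7))

theorem repr_mul_ee_left {i : V} (a : A) (z : P.NZ) (hz : z.1.2.1 ≠ i) :
    P.bas.repr (P.ee i * a) z = 0 := by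
  let φ₁ : A →ₗ[k] k :=
    (Finsupp.lapply z) ∘ₗ (P.bas.repr : A →ₗ[k] (P.NZ →₀ k)) ∘ₗ (LinearMap.mulLeft k (P.ee i))
  suffices h : φ₁ = 0 by
    have h2 := DFunLike.congr_fun h a
    exact h2
  classical
  apply P.bas.ext
  rintro ⟨⟨s', t', r⟩, hr⟩
  have hb : P.bas ⟨⟨s', t', r⟩, hr⟩ = P.ι r := P.bas_apply _
  show (P.bas.repr (P.ee i * P.bas ⟨⟨s', t', r⟩, hr⟩)) z = 0
  by_cases ht : t' = i
  · subst ht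
    rw [hb, P.ee_mul r, ← hb, Module.Basis.repr_self, Finsupp.single_apply, if_neg]
    intro hEq
    rw [Subtype.ext_iff] at hEq
    apply hz
    obtain ⟨h6, h7⟩ := Sigma.mk.inj_iff.mp hEq.symm
    subst h6
    exact (congrArg Sigma.fst (eq_of_heq h7))
  · rw [hb, show P.ee i = P.ι (Quiver.Path.nil : Quiver.Path i i) from rfl,
      P.mul_of_ne _ r (fun h => ht h.symm), map_zero, Finsupp.zero_apply]

end MonomialPresentation
namespace MonomialPresentation

open Quiver

set_option linter.unusedSectionVars false

variable {k : Type u} {A : Type v} {V : Type w}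
  [Field k] [Ring A] [Algebra k A] [Quiver.{w} V] [Fintype V]
  (P : MonomialPresentation k A V)

lemma mem_span_singleton_iff {a w : A} :
    a ∈ Submodule.span A {w} ↔ ∃ b : A, b * w = a := by
  rw [Submodule.mem_span_singleton]
  simp [smul_eq_mul]

lemma mem_span_ee_iff {i : V} {a : A} :
    a ∈ Submodule.span A {P.ee i} ↔ a * P.ee i = a := by
  constructor
  · intro h
    obtain ⟨b, rfl⟩ := mem_span_singleton_iff.mp h
    rw [mul_assoc, P.ee_mul_ee]
  · intro h
    exact mem_span_singleton_iff.mpr ⟨a, h⟩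

lemma mul_ι_mem_span_ee {i j : V} (p : Quiver.Path i j) (c : A) :
    c * P.ι p ∈ Submodule.span A {P.ee i} :=
  P.mem_span_ee_iff.mpr (by rw [mul_assoc, P.mul_ee])

/-- The kernel lemma: for a perfect pair `(p, q)`, the left annihilator of `q`
inside `A e_{t(q)}` is `Ap`. -/
theorem mem_span_of_mul_eq_zero {i j l : V} {p : Quiver.Path i j} {q : Quiver.Path l i}
    (hpq : P.PerfectPair p q) {a : A} (ha : a ∈ Submodule.span A {P.ee i})
    (h0 : a * P.ι q = 0) : a ∈ Submodule.span A {P.ι p} := by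
  obtain ⟨b, hb⟩ := mem_span_singleton_iff.mp ha
  have key : ∀ y : P.NZ, y ∈ (P.bas.repr a).support →
      (P.bas.repr a y) • P.bas y ∈ Submodule.span A {P.ι p} := by
    rintro ⟨⟨s', t', r⟩, hr⟩ hy
    by_cases hs : s' = i
    · subst hs
      by_cases hzc : P.Z (q.comp r)
      · obtain ⟨zp, rfl⟩ := hpq.2.2.2.2.2.2 t' r hr hzc
        rw [P.bas_apply]
        show (P.bas.repr a _) • P.ι (p.comp zp) ∈ _
        rw [P.mul_comp p zp]
        exact Submodule.smul_of_tower_mem _ _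
          (mem_span_singleton_iff.mpr ⟨P.ι zp, rfl⟩)
      · exfalso
        have h2 := P.repr_mul_right q r hzc a
        rw [h0, map_zero, Finsupp.zero_apply] at h2
        exact Finsupp.mem_support_iff.mp hy h2.symm
    · exfalso
      apply Finsupp.mem_support_iff.mp hy
      rw [← hb]
      exact P.repr_mul_ee b _ hs
  have hsum : a = (P.bas.repr a).sum fun y c => c • P.bas y := by
    rw [← Finsupp.linearCombination_apply, P.bas.linearCombination_repr]
  rw [hsum]
  exact Submodule.sum_mem _ key

/-- The dual kernel lemma: for a perfect pair `(p, q)`, the right annihilator of `p`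
inside `e_{s(p)} A` is `qA`. -/
theorem exists_of_mul_eq_zero {i j l : V} {p : Quiver.Path i j} {q : Quiver.Path l i}
    (hpq : P.PerfectPair p q) {a : A} (ha : P.ee i * a = a)
    (h0 : P.ι p * a = 0) : ∃ u : A, a = P.ι q * u := by
  suffices hmem : a ∈ LinearMap.range (LinearMap.mulLeft k (P.ι q)) by
    obtain ⟨u, hu⟩ := hmem
    exact ⟨u, hu.symm⟩
  have key : ∀ y : P.NZ, y ∈ (P.bas.repr a).support →
      (P.bas.repr a y) • P.bas y ∈ LinearMap.range (LinearMap.mulLeft k (P.ι q)) := by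
    rintro ⟨⟨s', t', r⟩, hr⟩ hy
    by_cases ht : t' = i
    · subst ht
      by_cases hzc : P.Z (r.comp p)
      · obtain ⟨zq, rfl⟩ := hpq.2.2.2.2.2.1 s' r hr hzc
        rw [P.bas_apply]
        show (P.bas.repr a _) • P.ι (zq.comp q) ∈ _
        rw [P.mul_comp zq q]
        exact ⟨(P.bas.repr a _) • P.ι zq, (mul_smul_comm _ _ _)⟩
      · exfalso
        have h2 := P.repr_mul_left p r hzc a
        rw [h0, map_zero, Finsupp.zero_apply] at h2
        exact Finsupp.mem_support_iff.mp hy h2.symm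
    · exfalso
      apply Finsupp.mem_support_iff.mp hy
      rw [← ha]
      exact P.repr_mul_ee_left a _ ht
  have hsum : a = (P.bas.repr a).sum fun y c => c • P.bas y := by
    rw [← Finsupp.linearCombination_apply, P.bas.linearCombination_repr]
  rw [hsum]
  exact Submodule.sum_mem _ key

/-! ### Facts about the perfect pair relation on bundled paths -/

lemma pairS_src {x y : PathIn V} (h : P.PerfectPairS x y) : y.2.1 = x.1 := by
  obtain ⟨i, j, l, p, q, rfl, rfl, hpq⟩ := h
  rfl

lemma pairS_nz_fst {x y : PathIn V} (h : P.PerfectPairS x y) : ¬ P.Z x.2.2 := by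
  obtain ⟨i, j, l, p, q, rfl, rfl, hpq⟩ := h
  exact hpq.2.2.1

lemma pairS_nz_snd {x y : PathIn V} (h : P.PerfectPairS x y) : ¬ P.Z y.2.2 := by
  obtain ⟨i, j, l, p, q, rfl, rfl, hpq⟩ := h
  exact hpq.2.2.2.1

lemma pairS_mul {x y : PathIn V} (h : P.PerfectPairS x y) :
    P.ι x.2.2 * P.ι y.2.2 = 0 := by
  obtain ⟨i, j, l, p, q, rfl, rfl, hpq⟩ := h
  show P.ι p * P.ι q = 0
  rw [P.ι_mul p q]
  exact (P.zero_iff _).mpr hpq.2.2.2.2.1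

lemma pairS_ker {x y : PathIn V} (h : P.PerfectPairS x y) {a : A}
    (ha : a ∈ Submodule.span A {P.ee y.2.1}) (h0 : a * P.ι y.2.2 = 0) :
    a ∈ Submodule.span A {P.ι x.2.2} := by
  obtain ⟨i, j, l, p, q, rfl, rfl, hpq⟩ := h
  exact P.mem_span_of_mul_eq_zero hpq ha h0

lemma pairS_dual {x y : PathIn V} (h : P.PerfectPairS x y) {a : A}
    (ha : P.ee x.1 * a = a) (h0 : P.ι x.2.2 * a = 0) :
    ∃ u : A, a = P.ι y.2.2 * u := by
  obtain ⟨i, j, l, p, q, rfl, rfl, hpq⟩ := h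
  exact P.exists_of_mul_eq_zero hpq ha h0

end MonomialPresentation
namespace MonomialPresentation

open Quiver

set_option linter.unusedSectionVars false

variable {k : Type u} {A : Type v} {V : Type w}
  [Field k] [Ring A] [Algebra k A] [Quiver.{w} V] [Fintype V]
  (P : MonomialPresentation k A V)

/-- If `pq = 0` with `p, q` nonzero and `s(p) = t(q)`, then `Aq` is not projective. -/
theorem not_projective_of_ann {i j l : V} (p : Quiver.Path i j) (q : Quiver.Path l i)
    (hnp : ¬ P.Z p) (hnq : ¬ P.Z q) (h0 : P.ι p * P.ι q = 0) :
    ¬ Module.Projective A ↥(Submodule.span A {P.ι q}) := by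
  intro hproj
  set M := Submodule.span A {P.ι q} with hM
  have hqM : P.ι q ∈ M := Submodule.subset_span rfl
  let f : A →ₗ[A] M := LinearMap.codRestrict M (LinearMap.toSpanSingleton A A (P.ι q))
    (fun c => Submodule.smul_mem _ c hqM)
  have hf : Function.Surjective f := by
    rintro ⟨m, hm⟩
    obtain ⟨c, hc⟩ := mem_span_singleton_iff.mp hm
    exact ⟨c, Subtype.ext (by show c • P.ι q = m; rw [smul_eq_mul]; exact hc)⟩
  obtain ⟨s, hs⟩ := Module.projective_lifting_property f LinearMap.id hf
  set u : A := s ⟨P.ι q, hqM⟩ with hu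
  have h1 : u * P.ι q = P.ι q := by
    have h2 := congrArg Subtype.val (DFunLike.congr_fun hs ⟨P.ι q, hqM⟩)
    have h3 : u • P.ι q = P.ι q := h2
    rwa [smul_eq_mul] at h3
  have h2 : P.ι p * u = 0 := by
    have e0 : (P.ι p) • (⟨P.ι q, hqM⟩ : M) = 0 := Subtype.ext (by
      show P.ι p • P.ι q = (0 : A)
      rw [smul_eq_mul, h0])
    calc P.ι p * u = P.ι p • u := rfl
      _ = s ((P.ι p) • ⟨P.ι q, hqM⟩) := (map_smul s _ _).symm
      _ = s 0 := by rw [e0]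
      _ = 0 := map_zero s
  -- coordinate computations
  have hnnil : ¬ P.Z ((q.comp (Quiver.Path.nil : Quiver.Path i i))) := by
    rw [Quiver.Path.comp_nil]; exact hnq
  have c1 := P.repr_mul_right q (Quiver.Path.nil : Quiver.Path i i) hnnil u
  rw [h1] at c1
  have hb : P.bas ⟨⟨l, i, q.comp (Quiver.Path.nil : Quiver.Path i i)⟩, hnnil⟩ = P.ι q :=
    P.bas_apply _
  have left_val : P.bas.repr (P.ι q) ⟨⟨l, i, q.comp (Quiver.Path.nil : Quiver.Path i i)⟩,
      hnnil⟩ = 1 := by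
    rw [← hb, Module.Basis.repr_self, Finsupp.single_eq_same]
  have cA := c1.symm.trans left_val
  have hnnil2 : ¬ P.Z ((Quiver.Path.nil : Quiver.Path i i).comp p) := by
    rw [Quiver.Path.nil_comp]; exact hnp
  have c2 := P.repr_mul_left p (Quiver.Path.nil : Quiver.Path i i) hnnil2 u
  rw [h2, map_zero, Finsupp.zero_apply] at c2
  exact one_ne_zero (cA.symm.trans c2.symm)

end MonomialPresentation
namespace MonomialPresentation

open Quiver

set_option linter.unusedSectionVars false

variable {k : Type u} {A : Type v} {V : Type w}
  [Field k] [Ring A] [Algebra k A] [Quiver.{w} V] [Fintype V]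
  (P : MonomialPresentation k A V)

theorem projective_span_ee (i : V) :
    Module.Projective A ↥(Submodule.span A {P.ee i}) := by
  refine Module.Projective.of_split (R := A) (M := A)
    (Submodule.span A {P.ee i}).subtype
    (LinearMap.codRestrict _ (LinearMap.toSpanSingleton A A (P.ee i))
      (fun c => Submodule.smul_mem _ c (Submodule.subset_span rfl))) ?_
  ext x
  show x.val • P.ee i = x.val
  rw [smul_eq_mul]
  exact P.mem_span_ee_iff.mp x.2

variable (π : ℤ → PathIn V)

/-- The modules in the totally acyclic complex. -/
def chainMod (z : ℤ) : Submodule A A := Submodule.span A {P.ee ((π z).2.1)}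

variable (hπ : ∀ z : ℤ, P.PerfectPairS (π z) (π (z + 1)))

/-- The differentials: right multiplication by the path at position `z`. -/
def chainD (z : ℤ) : ↥(P.chainMod π z) →ₗ[A] ↥(P.chainMod π (z + 1)) :=
  LinearMap.codRestrict _
    ((LinearMap.toSpanSingleton A A (P.ι ((π z).2.2))).comp (P.chainMod π z).subtype)
    (fun a => by
      show a.val • P.ι ((π z).2.2) ∈ Submodule.span A {P.ee ((π (z + 1)).2.1)}
      rw [smul_eq_mul, P.pairS_src (hπ z)]
      exact P.mul_ι_mem_span_ee _ _)

lemma chainD_val (z : ℤ) (a : ↥(P.chainMod π z)) :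
    (P.chainD π hπ z a : A) = a.val * P.ι ((π z).2.2) := rfl

theorem chain_exact (z : ℤ) :
    Function.Exact (P.chainD π hπ z) (P.chainD π hπ (z + 1)) := by
  intro y
  constructor
  · intro hy
    have hy' : y.val * P.ι ((π (z + 1)).2.2) = 0 := by
      rw [← P.chainD_val π hπ (z + 1) y, hy]
      rfl
    have hmem : y.val ∈ Submodule.span A {P.ι ((π z).2.2)} :=
      P.pairS_ker (hπ z) y.2 hy'
    obtain ⟨b, hb⟩ := mem_span_singleton_iff.mp hmem
    refine ⟨⟨b * P.ee ((π z).2.1), mem_span_singleton_iff.mpr ⟨b, rfl⟩⟩, ?_⟩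
    apply Subtype.ext
    rw [P.chainD_val π hπ]
    show b * P.ee ((π z).2.1) * P.ι ((π z).2.2) = y.val
    rw [mul_assoc, P.ee_mul]
    exact hb
  · rintro ⟨a, rfl⟩
    apply Subtype.ext
    rw [P.chainD_val π hπ, P.chainD_val π hπ]
    show a.val * P.ι ((π z).2.2) * P.ι ((π (z + 1)).2.2) = (0 : A)
    rw [mul_assoc, P.pairS_mul (hπ z), mul_zero]

theorem chain_dual_exact (z : ℤ) :
    Function.Exact
      (fun f : ↥(P.chainMod π (z + 1 + 1)) →ₗ[A] A => f.comp (P.chainD π hπ (z + 1)))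
      (fun f : ↥(P.chainMod π (z + 1)) →ₗ[A] A => f.comp (P.chainD π hπ z)) := by
  intro g
  constructor
  · intro hg
    -- `w` is the image of the idempotent generator
    set i : V := (π (z + 1)).2.1 with hi
    have heM : P.ee i ∈ P.chainMod π (z + 1) := Submodule.subset_span rfl
    set wA : A := g ⟨P.ee i, heM⟩ with hwA
    have hgen : ∀ a : ↥(P.chainMod π (z + 1)), g a = a.val * wA := by
      rintro ⟨a, ha⟩
      obtain ⟨c, hc⟩ := mem_span_singleton_iff.mp ha
      have : (⟨a, ha⟩ : ↥(P.chainMod π (z + 1))) = c • ⟨P.ee i, heM⟩ := by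
        apply Subtype.ext
        show a = c • P.ee i
        rw [smul_eq_mul]; exact hc.symm
      rw [this, map_smul, smul_eq_mul]
      show c * wA = c * P.ee i * wA
      have hee : P.ee i * wA = wA := by
        have h3 : (⟨P.ee i, heM⟩ : ↥(P.chainMod π (z + 1))) = P.ee i • ⟨P.ee i, heM⟩ := by
          apply Subtype.ext
          show P.ee i = P.ee i • P.ee i
          rw [smul_eq_mul, P.ee_mul_ee]
        calc P.ee i * wA = P.ee i • wA := rfl
          _ = g (P.ee i • ⟨P.ee i, heM⟩) := (map_smul g _ _).symm
          _ = wA := by rw [← h3]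
      rw [mul_assoc, hee]
    have hw0 : P.ι ((π z).2.2) * wA = 0 := by
      have hιmem : P.ι ((π z).2.2) ∈ P.chainMod π (z + 1) := by
        show P.ι ((π z).2.2) ∈ Submodule.span A {P.ee ((π (z + 1)).2.1)}
        rw [P.pairS_src (hπ z)]
        exact P.mem_span_ee_iff.mpr (P.mul_ee _)
      have heTz : P.ee ((π z).2.1) ∈ P.chainMod π z := Submodule.subset_span rfl
      have hd : P.chainD π hπ z ⟨P.ee ((π z).2.1), heTz⟩
          = ⟨P.ι ((π z).2.2), hιmem⟩ := by
        apply Subtype.ext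
        rw [P.chainD_val π hπ]
        exact P.ee_mul _
      have h5 := DFunLike.congr_fun hg ⟨P.ee ((π z).2.1), heTz⟩
      have h6 : g (P.chainD π hπ z ⟨P.ee ((π z).2.1), heTz⟩) = 0 := h5
      rw [hd, hgen] at h6
      exact h6
    have haw : P.ee ((π z).1) * wA = wA := by
      have h7 : P.ee ((π z).1) = P.ee i := by rw [hi, P.pairS_src (hπ z)]
      rw [h7]
      have h3 : (⟨P.ee i, heM⟩ : ↥(P.chainMod π (z + 1))) = P.ee i • ⟨P.ee i, heM⟩ := by
        apply Subtype.ext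
        show P.ee i = P.ee i • P.ee i
        rw [smul_eq_mul, P.ee_mul_ee]
      calc P.ee i * wA = P.ee i • wA := rfl
        _ = g (P.ee i • ⟨P.ee i, heM⟩) := (map_smul g _ _).symm
        _ = wA := by rw [← h3]
    obtain ⟨uu, huu⟩ := P.pairS_dual (hπ z) haw hw0
    refine ⟨(LinearMap.toSpanSingleton A A uu).comp (P.chainMod π (z + 1 + 1)).subtype, ?_⟩
    ext a
    show (a.val * P.ι ((π (z + 1)).2.2)) • uu = g a
    rw [smul_eq_mul, hgen a, mul_assoc, ← huu]
  · rintro ⟨f, rfl⟩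
    ext a
    show f (P.chainD π hπ (z + 1) (P.chainD π hπ z a)) = 0
    have hzero : P.chainD π hπ (z + 1) (P.chainD π hπ z a) = 0 := by
      apply Subtype.ext
      rw [P.chainD_val π hπ, P.chainD_val π hπ]
      show a.val * P.ι ((π z).2.2) * P.ι ((π (z + 1)).2.2) = (0 : A)
      rw [mul_assoc, P.pairS_mul (hπ z), mul_zero]
    rw [hzero, map_zero]

end MonomialPresentation
namespace MonomialPresentation

open Quiver

set_option linter.unusedSectionVars false

variable {k : Type u} {A : Type v} {V : Type w}
  [Field k] [Ring A] [Algebra k A] [Quiver.{w} V] [Fintype V]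
  (P : MonomialPresentation k A V)

theorem chain_cocycle (π : ℤ → PathIn V) (hπ : ∀ z : ℤ, P.PerfectPairS (π z) (π (z + 1)))
    (x : PathIn V) (hx : π (-1) = x) :
    Nonempty ((↥(Submodule.span A {P.ι x.2.2})) ≃ₗ[A] ↥(LinearMap.ker (P.chainD π hπ 0))) := by
  have hp0 : P.PerfectPairS (π (-1)) (π 0) := by
    have h := hπ (-1)
    norm_num at h
    exact h
  have hxι : P.ι ((π (-1)).2.2) = P.ι x.2.2 := by rw [hx]
  have hsrc : (π 0).2.1 = x.1 := by
    have h := P.pairS_src hp0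
    rw [hx] at h
    exact h
  have hmul : P.ι x.2.2 * P.ι ((π 0).2.2) = 0 := by
    have h := P.pairS_mul hp0
    rw [hx] at h
    exact h
  have key1 : ∀ a : A, a ∈ Submodule.span A {P.ι x.2.2} → a ∈ P.chainMod π 0 := by
    intro a ha
    obtain ⟨b, rfl⟩ := mem_span_singleton_iff.mp ha
    show b * P.ι x.2.2 ∈ Submodule.span A {P.ee ((π 0).2.1)}
    rw [hsrc]
    exact P.mul_ι_mem_span_ee _ _
  have key2 : ∀ a : A, a ∈ Submodule.span A {P.ι x.2.2} → a * P.ι ((π 0).2.2) = 0 := by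
    intro a ha
    obtain ⟨b, rfl⟩ := mem_span_singleton_iff.mp ha
    rw [mul_assoc, hmul, mul_zero]
  have key3 : ∀ a : ↥(P.chainMod π 0), a.val * P.ι ((π 0).2.2) = 0 →
      a.val ∈ Submodule.span A {P.ι x.2.2} := by
    intro a h0
    have h := P.pairS_ker hp0 a.2 h0
    rw [hxι] at h
    exact h
  let f : ↥(Submodule.span A {P.ι x.2.2}) →ₗ[A] ↥(LinearMap.ker (P.chainD π hπ 0)) :=
    LinearMap.codRestrict _
      (LinearMap.codRestrict (P.chainMod π 0) (Submodule.span A {P.ι x.2.2}).subtype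
        (fun m => key1 m.val m.2))
      (fun m => by
        rw [LinearMap.mem_ker]
        apply Subtype.ext
        rw [P.chainD_val π hπ]
        show m.val * P.ι ((π 0).2.2) = (0 : A)
        exact key2 m.val m.2)
  let g : ↥(LinearMap.ker (P.chainD π hπ 0)) →ₗ[A] ↥(Submodule.span A {P.ι x.2.2}) :=
    LinearMap.codRestrict _
      ((P.chainMod π 0).subtype.comp (LinearMap.ker (P.chainD π hπ 0)).subtype)
      (fun m => by
        refine key3 m.val ?_
        have h := LinearMap.mem_ker.mp m.2
        rw [← P.chainD_val π hπ 0 m.val, h]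
        rfl)
  exact ⟨LinearEquiv.ofLinear f g (by ext a; rfl) (by ext a; rfl)⟩

set_option maxHeartbeats 1000000 in
theorem exists_chain {x : PathIn V} (hx : P.IsPerfectPath x) :
    ∃ π : ℤ → PathIn V, π (-1) = x ∧ ∀ z : ℤ, P.PerfectPairS (π z) (π (z + 1)) := by
  obtain ⟨n, c, h0, hl, hp⟩ := hx
  have hm : (0 : ℤ) < (n : ℤ) + 1 := by positivity
  have hr : ∀ z : ℤ, 0 ≤ (z + 1) % ((n : ℤ) + 1) ∧ (z + 1) % ((n : ℤ) + 1) < (n : ℤ) + 1 :=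
    fun z => ⟨Int.emod_nonneg _ (by omega), Int.emod_lt_of_pos _ hm⟩
  have hidx : ∀ z : ℤ, ((z + 1) % ((n : ℤ) + 1)).toNat < n + 2 :=
    fun z => by have := hr z; omega
  refine ⟨fun z => c ⟨((z + 1) % ((n : ℤ) + 1)).toNat, hidx z⟩, ?_, ?_⟩
  · have e1 : (⟨(((-1 : ℤ) + 1) % ((n : ℤ) + 1)).toNat, hidx (-1)⟩ : Fin (n + 2))
        = (0 : Fin (n + 2)) := by
      apply Fin.ext
      norm_num
    show c _ = x
    rw [e1]
    exact h0
  · intro z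
    have hdvd : (z + 1) - (z + 1) % ((n : ℤ) + 1)
        = ((n : ℤ) + 1) * ((z + 1) / ((n : ℤ) + 1)) := by
      rw [Int.emod_def]; ring
    have hsplit : z + 1 + 1 = ((z + 1) % ((n : ℤ) + 1) + 1)
        + ((n : ℤ) + 1) * ((z + 1) / ((n : ℤ) + 1)) := by omega
    have hmod : (z + 1 + 1) % ((n : ℤ) + 1) = ((z + 1) % ((n : ℤ) + 1) + 1) % ((n : ℤ) + 1) := by
      conv_lhs => rw [hsplit]
      rw [Int.add_mul_emod_self_left]
    have hb1 := hr z
    have hb2 := hr (z + 1)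
    have hlt1 : ((z + 1) % ((n : ℤ) + 1)).toNat < n + 1 := by omega
    by_cases hcase : (z + 1) % ((n : ℤ) + 1) = (n : ℤ)
    · -- wraparound
      have h2 : (z + 1 + 1) % ((n : ℤ) + 1) = 0 := by
        have h3 : (z + 1) % ((n : ℤ) + 1) + 1 = (n : ℤ) + 1 := by omega
        rw [hmod, h3, Int.emod_self]
      have hn1 : n < n + 1 := by omega
      have e1 : (⟨((z + 1) % ((n : ℤ) + 1)).toNat, hidx z⟩ : Fin (n + 2))
          = Fin.castSucc ⟨n, hn1⟩ := by
        apply Fin.ext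
        show ((z + 1) % ((n : ℤ) + 1)).toNat = n
        omega
      have e2 : c (⟨((z + 1 + 1) % ((n : ℤ) + 1)).toNat, hidx (z + 1)⟩ : Fin (n + 2))
          = c (Fin.succ ⟨n, hn1⟩) := by
        have v1 : (⟨((z + 1 + 1) % ((n : ℤ) + 1)).toNat, hidx (z + 1)⟩ : Fin (n + 2))
            = (0 : Fin (n + 2)) := by
          apply Fin.ext
          show ((z + 1 + 1) % ((n : ℤ) + 1)).toNat = _
          rw [h2]
          simp
        have v2 : Fin.succ (⟨n, hn1⟩ : Fin (n + 1)) = Fin.last (n + 1) := by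
          apply Fin.ext
          simp [Fin.last]
        rw [v1, v2, hl, ← h0]
      beta_reduce
      rw [e1, e2]
      exact hp ⟨n, hn1⟩
    · -- no wraparound
      have h2 : (z + 1 + 1) % ((n : ℤ) + 1) = (z + 1) % ((n : ℤ) + 1) + 1 := by
        rw [hmod]
        exact Int.emod_eq_of_lt (by omega) (by omega)
      have e1 : (⟨((z + 1) % ((n : ℤ) + 1)).toNat, hidx z⟩ : Fin (n + 2))
          = Fin.castSucc ⟨((z + 1) % ((n : ℤ) + 1)).toNat, hlt1⟩ := by
        apply Fin.ext
        rfl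
      have e2 : (⟨((z + 1 + 1) % ((n : ℤ) + 1)).toNat, hidx (z + 1)⟩ : Fin (n + 2))
          = Fin.succ ⟨((z + 1) % ((n : ℤ) + 1)).toNat, hlt1⟩ := by
        apply Fin.ext
        show ((z + 1 + 1) % ((n : ℤ) + 1)).toNat = _
        simp [Fin.val_succ]
        omega
      beta_reduce
      rw [e1, e2]
      exact hp _

end MonomialPresentation
open MonomialPresentation in
/-- Proposition 4.3(4): for a perfect path `p` in a monomial algebra `A`, the cyclic
module `Ap` is non-projective and Gorenstein-projective. -/
theorem cyclic_module_of_perfect_path_is_gorenstein_projective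
    (k : Type u) (A : Type v) (V : Type w)
    [Field k] [Ring A] [Algebra k A] [FiniteDimensional k A] [Quiver.{w} V] [Fintype V]
    (P : MonomialPresentation k A V) (x : PathIn V) (hx : P.IsPerfectPath x) :
    IsGorensteinProjective k A (Submodule.span A {P.ι x.2.2}) ∧
      ¬ Module.Projective A (Submodule.span A {P.ι x.2.2}) := by
  obtain ⟨π, hx1, hπ⟩ := P.exists_chain hx
  constructor
  · obtain ⟨eqv⟩ := P.chain_cocycle π hπ x hx1
    exact ⟨{
      P := fun z => ↥(P.chainMod π z)
      proj := fun z => P.projective_span_ee _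
      fin := fun z => Module.Finite.span_of_finite A (Set.finite_singleton _)
      d := P.chainD π hπ
      ex := P.chain_exact π hπ
      dualEx := fun n => P.chain_dual_exact π hπ n
      cocycle := ⟨eqv⟩ }⟩
  · have hpair := hπ (-2)
    have h21 : (-2 : ℤ) + 1 = -1 := by norm_num
    rw [h21] at hpair
    obtain ⟨i, j, l, p, q, h1, h2, hpq⟩ := hpair
    have hxq : P.ι x.2.2 = P.ι q := by rw [← hx1, h2]
    rw [hxq]
    have hmul : P.ι p * P.ι q = 0 := by
      rw [P.ι_mul p q]
      exact (P.zero_iff _).mpr hpq.2.2.2.2.1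
    exact P.not_projective_of_ann p q hpq.2.2.1 hpq.2.2.2.1 hmul
end
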